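/- arXiv:1203.2446 — 17 statements merged into one kernel-verified Lean document; each statement's English description precedes it below -/
import Mathlib

section
/- For every H with 1/2 ≤ H < 1, setting p = 2(1-H), one has for all t ≥ 0: B_H(t) ≤ (3 exp(-p t/2) - exp(-3 p t/2))/2. -/
open Real

/-- Correlation function of the stationary Gaussian process dual to the
integrated fractional Brownian motion `I_H`. -/
noncomputable def dualCorrIFBM (H s : ℝ) : ℝ :=
  (2 + 4 * H)⁻¹ *
    ((2 + 2 * H) * (exp (H * s) + exp (-(H * s))) - exp ((1 + H) * s)
      - exp (-((1 + H) * s)) + (exp (s / 2) - exp (-(s / 2))) ^ (2 * H + 2))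

lemma chord_rpow (z w e : ℝ) (m n : ℕ) (hz : 0 ≤ z) (hw0 : 0 ≤ w) (hw1 : w ≤ 1)
    (he : e = w * m + (1 - w) * n) (he0 : e ≠ 0) :
    z ^ e ≤ w * z ^ m + (1 - w) * z ^ n := by
  have hne : (m : ℝ) * w + (n : ℝ) * (1 - w) ≠ 0 := by
    intro h
    exact he0 (by linear_combination he + h)
  have h1 : z ^ e = (z ^ m) ^ w * (z ^ n) ^ (1 - w) := by
    rw [← Real.rpow_natCast z m, ← Real.rpow_natCast z n, ← Real.rpow_mul hz,
      ← Real.rpow_mul hz, ← Real.rpow_add' hz hne]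
    congr 1
    rw [he]; ring
  rw [h1]
  exact Real.geom_mean_le_arith_mean2_weighted hw0 (by linarith) (pow_nonneg hz m)
    (pow_nonneg hz n) (by ring)

lemma key_ineq (H y : ℝ) (hH0 : 1 / 2 ≤ H) (hH1 : H < 1) (hy0 : 0 < y) (hy1 : y ≤ 1) :
    (2 + 2 * H) * (y + y ^ (1 + 2 * H)) - 1 - y ^ (2 + 2 * H) + (1 - y) ^ (2 * H + 2)
      ≤ (1 + 2 * H) * (3 * y ^ 2 - y ^ (4 - 2 * H)) := by
  have h1 : y ^ (1 + 2 * H) ≤ (2 - 2 * H) * y ^ 2 + (1 - (2 - 2 * H)) * y ^ 3 :=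
    chord_rpow y (2 - 2 * H) (1 + 2 * H) 2 3 hy0.le (by linarith) (by linarith)
      (by push_cast; ring) (by intro h; nlinarith)
  have h2 : y ^ (4 - 2 * H) ≤ (2 * H - 1) * y ^ 2 + (1 - (2 * H - 1)) * y ^ 3 :=
    chord_rpow y (2 * H - 1) (4 - 2 * H) 2 3 hy0.le (by linarith) (by linarith)
      (by push_cast; ring) (by intro h; nlinarith)
  have h3 : (1 - y) ^ (2 * H + 2) ≤ (2 - 2 * H) * (1 - y) ^ 3 + (1 - (2 - 2 * H)) * (1 - y) ^ 4 :=
    chord_rpow (1 - y) (2 - 2 * H) (2 * H + 2) 3 4 (by linarith) (by linarith) (by linarith)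
      (by push_cast; ring) (by intro h; nlinarith)
  have h4 : y ^ (2 + 2 * H) = y * y ^ (1 + 2 * H) := by
    have h := Real.rpow_add hy0 1 (1 + 2 * H)
    rw [Real.rpow_one] at h
    rw [show (2:ℝ) + 2 * H = 1 + (1 + 2 * H) by ring]
    exact h
  have key1 : (2 + 2 * H - y) * (y ^ (1 + 2 * H))
      ≤ (2 + 2 * H - y) * ((2 - 2 * H) * y ^ 2 + (1 - (2 - 2 * H)) * y ^ 3) :=
    mul_le_mul_of_nonneg_left h1 (by linarith)
  have key2 : (1 + 2 * H) * (y ^ (4 - 2 * H))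
      ≤ (1 + 2 * H) * ((2 * H - 1) * y ^ 2 + (1 - (2 * H - 1)) * y ^ 3) :=
    mul_le_mul_of_nonneg_left h2 (by linarith)
  nlinarith [key1, key2, h3, h4]

theorem stmt_1 (H : ℝ) (hH0 : 1 / 2 ≤ H) (hH1 : H < 1) (p : ℝ) (hp : p = 2 * (1 - H))
    (t : ℝ) (ht : 0 ≤ t) :
    dualCorrIFBM H t ≤ (3 * exp (-(p * t) / 2) - exp (-(3 * p * t) / 2)) / 2 := by
  subst hp
  set y : ℝ := exp (-t) with hy
  have hy0 : 0 < y := exp_pos _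
  have hy1 : y ≤ 1 := exp_le_one_iff.mpr (by linarith)
  have hrw : ∀ e : ℝ, y ^ e = exp (-(t * e)) := fun e => by
    rw [hy, Real.rpow_def_of_pos (exp_pos _), Real.log_exp, neg_mul]
  have e1 : exp (H * t) = y ^ (-H) := by rw [hrw]; congr 1; ring
  have e2 : exp (-(H * t)) = y ^ H := by rw [hrw]; congr 1; ring
  have e3 : exp ((1 + H) * t) = y ^ (-(1 + H)) := by rw [hrw]; congr 1; ring
  have e4 : exp (-((1 + H) * t)) = y ^ (1 + H) := by rw [hrw]; congr 1; ring
  have e5 : exp (t / 2) = y ^ (-(1/2) : ℝ) := by rw [hrw]; congr 1; ring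
  have e6 : exp (-(t / 2)) = y ^ ((1/2) : ℝ) := by rw [hrw]; congr 1; ring
  have e7 : exp (-(2 * (1 - H) * t) / 2) = y ^ (1 - H) := by rw [hrw]; congr 1; ring
  have e8 : exp (-(3 * (2 * (1 - H)) * t) / 2) = y ^ (3 - 3 * H) := by rw [hrw]; congr 1; ring
  have hmul : ∀ b c : ℝ, y ^ b * y ^ c = y ^ (b + c) := fun b c => (Real.rpow_add hy0 b c).symm
  have hbr : y ^ (-(1/2) : ℝ) - y ^ ((1/2) : ℝ) = y ^ (-(1/2) : ℝ) * (1 - y) := by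
    have h : y ^ (-(1/2) : ℝ) * y ^ ((1:ℝ)) = y ^ ((1/2) : ℝ) := by rw [hmul]; norm_num
    rw [Real.rpow_one] at h
    rw [mul_sub, mul_one, h]
  -- products
  have p1 : y ^ (-H) * y ^ (1 + H) = y := by
    rw [hmul, show -H + (1 + H) = (1:ℝ) by ring, Real.rpow_one]
  have p2 : y ^ H * y ^ (1 + H) = y ^ (1 + 2 * H) := by
    rw [hmul]; congr 1; ring
  have p3 : y ^ (-(1 + H)) * y ^ (1 + H) = 1 := by
    rw [hmul, show -(1 + H) + (1 + H) = (0:ℝ) by ring, Real.rpow_zero]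
  have p4 : y ^ (1 + H) * y ^ (1 + H) = y ^ (2 + 2 * H) := by
    rw [hmul]; congr 1; ring
  have p5 : (y ^ (-(1/2) : ℝ) - y ^ ((1/2) : ℝ)) ^ (2 * H + 2) * y ^ (1 + H)
      = (1 - y) ^ (2 * H + 2) := by
    rw [hbr, Real.mul_rpow (Real.rpow_pos_of_pos hy0 _).le (by linarith),
      ← Real.rpow_mul hy0.le, show (-(1/2) : ℝ) * (2 * H + 2) = -(1 + H) by ring,
      mul_right_comm, p3, one_mul]
  have p6 : y ^ (1 - H) * y ^ (1 + H) = y ^ 2 := by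
    rw [hmul, show (1 - H) + (1 + H) = ((2:ℕ):ℝ) by push_cast; ring, Real.rpow_natCast]
  have p7 : y ^ (3 - 3 * H) * y ^ (1 + H) = y ^ (4 - 2 * H) := by
    rw [hmul]; congr 1; ring
  have hyp : (0:ℝ) < y ^ (1 + H) := Real.rpow_pos_of_pos hy0 _
  have h24 : (0:ℝ) < 2 + 4 * H := by linarith
  rw [dualCorrIFBM, e1, e2, e3, e4, e5, e6, e7, e8, inv_mul_le_iff₀ h24]
  have key := key_ineq H y hH0 hH1 hy0 hy1
  have hL : ((2 + 2 * H) * (y ^ (-H) + y ^ H) - y ^ (-(1 + H)) - y ^ (1 + H)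
        + (y ^ (-(1/2) : ℝ) - y ^ ((1/2) : ℝ)) ^ (2 * H + 2)) * y ^ (1 + H)
      = (2 + 2 * H) * (y + y ^ (1 + 2 * H)) - 1 - y ^ (2 + 2 * H) + (1 - y) ^ (2 * H + 2) := by
    linear_combination (2 + 2 * H) * p1 + (2 + 2 * H) * p2 - p3 - p4 + p5
  have hR : ((2 + 4 * H) * ((3 * y ^ (1 - H) - y ^ (3 - 3 * H)) / 2)) * y ^ (1 + H)
      = (1 + 2 * H) * (3 * y ^ 2 - y ^ (4 - 2 * H)) := by
    linear_combination (3 * (1 + 2 * H)) * p6 - (1 + 2 * H) * p7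
  have hfin : ((2 + 2 * H) * (y ^ (-H) + y ^ H) - y ^ (-(1 + H)) - y ^ (1 + H)
        + (y ^ (-(1/2) : ℝ) - y ^ ((1/2) : ℝ)) ^ (2 * H + 2)) * y ^ (1 + H)
      ≤ ((2 + 4 * H) * ((3 * y ^ (1 - H) - y ^ (3 - 3 * H)) / 2)) * y ^ (1 + H) := by
    rw [hL, hR]; exact key
  exact le_of_mul_le_mul_right hfin hyp
end

section
/- For every H with 0 < H ≤ 1/2, setting p = 2 * sqrt((1-H^2)/3), one has for all t ≥ 0: B_H(t) ≥ (3 exp(-p t/2) - exp(-3 p t/2))/2. -/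
open Real
set_option maxHeartbeats 1000000

noncomputable def F0 (H t : ℝ) : ℝ :=
  (2 + 2 * H) * (exp (H * t) + exp (-(H * t))) - exp ((1 + H) * t)
      - exp (-((1 + H) * t)) + (exp (t / 2) - exp (-(t / 2))) ^ (2 * H + 2)

noncomputable def F1 (H t : ℝ) : ℝ :=
  (2 + 2 * H) * (H * exp (H * t) - H * exp (-(H * t))) - (1 + H) * exp ((1 + H) * t)
      + (1 + H) * exp (-((1 + H) * t))
      + (exp (t / 2) / 2 + exp (-(t / 2)) / 2) * (2 * H + 2) * (exp (t / 2) - exp (-(t / 2))) ^ (2 * H + 1)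

noncomputable def F2 (H t : ℝ) : ℝ :=
  (2 + 2 * H) * (H ^ 2 * exp (H * t) + H ^ 2 * exp (-(H * t))) - (1 + H) ^ 2 * exp ((1 + H) * t)
      - (1 + H) ^ 2 * exp (-((1 + H) * t))
      + (2 * H + 2) * ((2 * H + 1) * (exp (t / 2) - exp (-(t / 2))) ^ (2 * H)
          * (exp (t / 2) / 2 + exp (-(t / 2)) / 2) ^ 2
        + (exp (t / 2) - exp (-(t / 2))) ^ (2 * H + 1) * (exp (t / 2) / 4 - exp (-(t / 2)) / 4))


lemma log_aux {v : ℝ} (h0 : 0 ≤ v) (h1 : v < 1) : v + v^2/2 ≤ -Real.log (1-v) := by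
  have hmono : MonotoneOn (fun x : ℝ => -Real.log (1-x) - x - x^2/2) (Set.Ico (0:ℝ) 1) := by
    have hder : ∀ x ∈ Set.Ico (0:ℝ) 1, HasDerivAt (fun x : ℝ => -Real.log (1-x) - x - x^2/2)
        ((1-x)⁻¹ - 1 - x) x := by
      intro x hx
      have hx1 : (0:ℝ) < 1 - x := by simp [Set.mem_Ico] at hx; linarith [hx.2]
      have h1 : HasDerivAt (fun x : ℝ => 1 - x) (-1) x := by
        simpa using (hasDerivAt_id x).const_sub 1
      have h2 : HasDerivAt (fun x : ℝ => Real.log (1-x)) ((1-x)⁻¹ * (-1)) x :=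
        (Real.hasDerivAt_log hx1.ne').comp x h1
      have h3 : HasDerivAt (fun x : ℝ => x^2/2) x x := by
        simpa using ((hasDerivAt_pow 2 x).div_const 2)
      have := (h2.neg.sub (hasDerivAt_id x)).sub h3
      refine this.congr_deriv (Eq.symm ?_)
      ring
    apply monotoneOn_of_deriv_nonneg (convex_Ico 0 1)
    · exact fun x hx => (hder x hx).continuousAt.continuousWithinAt
    · intro x hx
      rw [interior_Ico] at hx
      exact (hder x (Set.mem_Ico.2 ⟨hx.1.le, hx.2⟩)).differentiableAt.differentiableWithinAt
    · intro x hx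
      rw [interior_Ico] at hx
      rw [(hder x (Set.mem_Ico.2 ⟨hx.1.le, hx.2⟩)).deriv]
      have hx1 : (0:ℝ) < 1 - x := by linarith [hx.2]
      have : 1 + x ≤ (1-x)⁻¹ := by
        rw [show (1-x)⁻¹ = 1/(1-x) by rw [one_div], le_div_iff₀ hx1]
        nlinarith [hx.1.le, sq_nonneg x]
      linarith
  have h := hmono (Set.mem_Ico.2 ⟨le_refl 0, one_pos⟩) (Set.mem_Ico.2 ⟨h0, h1⟩) h0
  simp only [Real.log_one, sub_zero, neg_zero] at h
  norm_num at h
  linarith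

lemma core_alg (H p v y w : ℝ) (hH0 : 0 < H) (hH1 : H ≤ 1/2)
    (hp0 : 0 ≤ p) (hp2 : p^2 = 4*(1-H^2)/3)
    (hv0 : 0 < v) (hv1 : v < 1)
    (hyl : v*(1+(1-2*H)*(1-v)) ≤ y) (hy1 : y ≤ 1)
    (hwl : (1-v)*(1+(1-2*H)*(v+v^2/2)) ≤ w) (hwu : w ≤ 1-2*H*v) :
    p*((1-2*H*v) + v*y*(2*H-v) - w*(1-v^2)) ≤ (v-1) + v*y*(1-v) + w*((1-v)^2+(2*H+1)*v) := by
  have hd0 : (0:ℝ) ≤ 1-2*H := by linarith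
  have hc0 : (0:ℝ) ≤ (1-4*H^2)/6 := by nlinarith
  have hple : p ≤ 1 + (1-4*H^2)/6 := by nlinarith [sq_nonneg (p - (1 + (1-4*H^2)/6))]
  have hyv : v ≤ y := by nlinarith [mul_nonneg (mul_nonneg hv0.le hd0) (by linarith : (0:ℝ) ≤ 1-v)]
  have hD : 0 ≤ (1-2*H*v) + v*y*(2*H-v) - w*(1-v^2) := by
    have hw' : w*(1-v^2) ≤ (1-2*H*v)*(1-v^2) :=
      mul_le_mul_of_nonneg_right hwu (by nlinarith)
    rcases le_or_gt v (2*H) with h | h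
    · nlinarith [mul_nonneg (mul_nonneg hv0.le (hv0.le.trans hyv)) (by linarith : (0:ℝ) ≤ 2*H-v)]
    · nlinarith [mul_le_mul_of_nonneg_left hy1 (by nlinarith : (0:ℝ) ≤ v*(v-2*H)),
        mul_nonneg (mul_nonneg hH0.le hv0.le) (by nlinarith : (0:ℝ) ≤ 1-v^2)]
  have hCy : 0 ≤ v*((1-2*H) + (1-4*H^2)/6*(v-2*H)) := by
    apply mul_nonneg hv0.le
    nlinarith [mul_nonneg hc0 hv0.le]
  have hCw : 0 ≤ (1-v)^2+(2*H+1)*v+(1+(1-4*H^2)/6)*(1-v^2) := by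
    nlinarith [sq_nonneg (1-v), mul_nonneg hc0 (by nlinarith : (0:ℝ) ≤ 1-v^2)]
  have hR : 0 ≤ 2 + (1-2*H)*(1-3*v-v^2) + (1-2*H)^2*(5+v^2)/2 - (1-2*H)^3 := by
    nlinarith [mul_nonneg (mul_nonneg hd0 (by linarith : (0:ℝ) ≤ 1-v)) (by linarith : (0:ℝ) ≤ 4+v),
      mul_nonneg (mul_nonneg (mul_nonneg hd0 hd0) (by linarith : (0:ℝ) ≤ 1-v)) (by linarith : (0:ℝ) ≤ 1+v),
      (pow_le_one₀ hd0 (by linarith : (1:ℝ)-2*H ≤ 1) : (1-2*H)^3 ≤ 1), sq_nonneg (1-2*H), mul_nonneg hd0 (sq_nonneg (1-2*H))]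
  have e1 : 0 ≤ (v*((1-2*H) + (1-4*H^2)/6*(v-2*H))) * (y - v*(1+(1-2*H)*(1-v))) :=
    mul_nonneg hCy (by linarith)
  have e2 : 0 ≤ ((1-v)^2+(2*H+1)*v+(1+(1-4*H^2)/6)*(1-v^2)) * (w - (1-v)*(1+(1-2*H)*(v+v^2/2))) :=
    mul_nonneg hCw (by linarith)
  have hSlb : 0 ≤ ((1-2*H)/6)*v^2*(1-v)*(2 + (1-2*H)*(1-3*v-v^2) + (1-2*H)^2*(5+v^2)/2 - (1-2*H)^3) := by
    apply mul_nonneg (mul_nonneg (mul_nonneg (by linarith) (sq_nonneg v)) (by linarith)) hR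
  have hkey : ((v-1) + v*y*(1-v) + w*((1-v)^2+(2*H+1)*v)) - (1+(1-4*H^2)/6)*((1-2*H*v) + v*y*(2*H-v) - w*(1-v^2))
      = ((1-2*H)/6)*v^2*(1-v)*(2 + (1-2*H)*(1-3*v-v^2) + (1-2*H)^2*(5+v^2)/2 - (1-2*H)^3)
        + (v*((1-2*H) + (1-4*H^2)/6*(v-2*H))) * (y - v*(1+(1-2*H)*(1-v)))
        + ((1-v)^2+(2*H+1)*v+(1+(1-4*H^2)/6)*(1-v^2)) * (w - (1-v)*(1+(1-2*H)*(v+v^2/2))) := by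
    ring
  nlinarith [mul_le_mul_of_nonneg_right hple hD]


lemma core_pos (H p t : ℝ) (hH0 : 0 < H) (hH1 : H ≤ 1/2)
    (hp0 : 0 ≤ p) (hp2 : p^2 = 4*(1-H^2)/3) (ht : 0 < t) :
    0 ≤ F2 H t + 2*p*(F1 H t) + (1-H^2)*(F0 H t) := by
  set u : ℝ := exp (t/2) with hu_def
  set X : ℝ := exp (H*t) with hX_def
  have hu0 : 0 < u := exp_pos _
  have hu1 : 1 < u := one_lt_exp_iff.2 (by linarith)
  have hX0 : 0 < X := exp_pos _
  set v : ℝ := (u*u)⁻¹ with hv_def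
  have hv0 : 0 < v := by positivity
  have hv1 : v < 1 := by
    rw [hv_def, inv_lt_one_iff₀]; right; nlinarith
  have hv_exp : exp (-t) = v := by
    rw [hv_def, hu_def, ← exp_add, ← Real.exp_neg, neg_add]
    norm_num
    ring
  set y : ℝ := (X*X)⁻¹ with hy_def
  have hy_exp : exp (-(2*H*t)) = y := by
    rw [hy_def, hX_def, ← exp_add, ← Real.exp_neg]
    ring_nf
  have h1mv : 0 < 1 - v := by linarith
  set w : ℝ := exp (log (1-v) * (2*H)) with hw_def
  -- basic exp rewrites
  have he1 : exp (-(H*t)) = X⁻¹ := by rw [hX_def, ← Real.exp_neg]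
  have he2 : exp ((1+H)*t) = u*u*X := by rw [hu_def, hX_def, ← exp_add, ← exp_add]; ring_nf
  have he3 : exp (-((1+H)*t)) = (u*u*X)⁻¹ := by rw [← he2, ← Real.exp_neg]
  have he4 : exp (-(t/2)) = u⁻¹ := by rw [hu_def, ← Real.exp_neg]
  -- g rewrites
  have hguv : u - u⁻¹ = u*(1-v) := by
    rw [hv_def]; field_simp
  have hg0 : 0 < u - u⁻¹ := by
    rw [hguv]; positivity
  have hgw : (u - u⁻¹) ^ (2*H) = X * w := by
    rw [hguv, Real.mul_rpow hu0.le h1mv.le, Real.rpow_def_of_pos hu0,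
      Real.rpow_def_of_pos h1mv, hu_def, log_exp, ← hw_def, hX_def]
    rw [show t/2*(2*H) = H*t by ring]
  have hgw1 : (u - u⁻¹) ^ (2*H+1) = X * w * (u - u⁻¹) := by
    rw [Real.rpow_add hg0, Real.rpow_one, hgw]
  have hgw2 : (u - u⁻¹) ^ (2*H+2) = X * w * (u - u⁻¹)^2 := by
    rw [Real.rpow_add hg0, hgw, Real.rpow_two]
  -- hypotheses of core_alg
  have htv : 1 - v ≤ t := by
    have := add_one_le_exp (-t)
    rw [hv_exp] at this; linarith
  have hyl : v*(1+(1-2*H)*(1-v)) ≤ y := by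
    have h1 : exp (-(2*H*t)) = exp (-t) * exp ((1-2*H)*t) := by
      rw [← exp_add]; ring_nf
    have h2 : 1 + (1-2*H)*t ≤ exp ((1-2*H)*t) := by
      have := add_one_le_exp ((1-2*H)*t); linarith
    have h3 : 1 + (1-2*H)*(1-v) ≤ 1 + (1-2*H)*t := by
      have : (1-2*H)*(1-v) ≤ (1-2*H)*t := mul_le_mul_of_nonneg_left htv (by linarith)
      linarith
    calc v*(1+(1-2*H)*(1-v)) ≤ v * exp ((1-2*H)*t) := by
          apply mul_le_mul_of_nonneg_left _ hv0.le
          linarith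
      _ = y := by rw [← hv_exp, ← h1, hy_exp]
  have hy1 : y ≤ 1 := by
    rw [← hy_exp]; apply exp_le_one_iff.2; nlinarith
  have hwl : (1-v)*(1+(1-2*H)*(v+v^2/2)) ≤ w := by
    have h1 : w = (1-v) * exp ((1-2*H) * (-log (1-v))) := by
      rw [hw_def, ← exp_log h1mv, ← exp_add, log_exp]; ring_nf
    have h2 : 1 + (1-2*H)*(v+v^2/2) ≤ exp ((1-2*H) * (-log (1-v))) := by
      have ha := add_one_le_exp ((1-2*H) * (-log (1-v)))
      have hb : (1-2*H)*(v+v^2/2) ≤ (1-2*H) * (-log (1-v)) :=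
        mul_le_mul_of_nonneg_left (log_aux hv0.le hv1) (by linarith)
      linarith
    rw [h1]
    exact mul_le_mul_of_nonneg_left h2 h1mv.le
  have hwu : w ≤ 1-2*H*v := by
    have := Real.geom_mean_le_arith_mean2_weighted (by linarith : (0:ℝ) ≤ 2*H)
      (by linarith : (0:ℝ) ≤ 1-2*H) h1mv.le (zero_le_one) (by ring)
    rw [Real.one_rpow, mul_one, Real.rpow_def_of_pos h1mv] at this
    calc w = exp (log (1-v) * (2*H)) := hw_def
      _ ≤ 2*H*(1-v) + (1-2*H)*1 := this
      _ = 1-2*H*v := by ring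
  have key := core_alg H p v y w hH0 hH1 hp0 hp2 hv0 hv1 hyl hy1 hwl hwu
  have hpos : 0 ≤ ((v-1) + v*y*(1-v) + w*((1-v)^2+(2*H+1)*v)
      - p*((1-2*H*v) + v*y*(2*H-v) - w*(1-v^2))) * ((2*H+2) * (u*u*X)) := by
    apply mul_nonneg (by linarith) (by positivity)
  calc (0:ℝ) ≤ ((v-1) + v*y*(1-v) + w*((1-v)^2+(2*H+1)*v)
      - p*((1-2*H*v) + v*y*(2*H-v) - w*(1-v^2))) * ((2*H+2) * (u*u*X)) := hpos
    _ = F2 H t + 2*p*(F1 H t) + (1-H^2)*(F0 H t) := by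
        rw [F0, F1, F2, he1, he2, he3, he4, hgw, hgw1, hgw2, hv_def, hy_def]
        field_simp
        ring


lemma hasDerivAt_exp_lin (a s : ℝ) : HasDerivAt (fun x : ℝ => exp (a * x)) (a * exp (a * s)) s := by
  have h := ((hasDerivAt_id s).const_mul a).exp
  simpa [mul_comm] using h

lemma g_hasDerivAt (s : ℝ) : HasDerivAt (fun x : ℝ => exp (x / 2) - exp (-(x / 2)))
    (exp (s / 2) / 2 + exp (-(s / 2)) / 2) s := by
  have h1 := ((hasDerivAt_id s).div_const 2).exp
  have h2 := (((hasDerivAt_id s).div_const 2).neg).exp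
  have h := h1.sub h2
  refine h.congr_deriv (Eq.symm ?_)
  simp
  ring

lemma hasDerivAt_F0 (H : ℝ) (hH0 : 0 < H) (t : ℝ) : HasDerivAt (fun s => F0 H s) (F1 H t) t := by
  have e1 := (hasDerivAt_exp_lin H t)
  have e2 := ((hasDerivAt_id t).const_mul H).neg.exp
  have e3 := (hasDerivAt_exp_lin (1+H) t)
  have e4 := ((hasDerivAt_id t).const_mul (1+H)).neg.exp
  have eg := g_hasDerivAt t
  have erp := eg.rpow_const (p := 2*H+2) (Or.inr (by linarith))
  have h := ((((e1.add e2).const_mul (2+2*H)).sub e3).sub e4).add erp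
  refine h.congr_deriv (Eq.symm ?_)
  unfold F1
  rw [show (2*H+2)-1 = 2*H+1 by ring]
  simp
  ring

lemma hasDerivAt_F1 (H : ℝ) (hH0 : 0 < H) (t : ℝ) (ht : 0 < t) :
    HasDerivAt (fun s => F1 H s) (F2 H t) t := by
  have hgpos : 0 < exp (t / 2) - exp (-(t / 2)) := by
    have : exp (-(t/2)) < exp (t/2) := exp_lt_exp.2 (by linarith)
    linarith
  have e1 := (hasDerivAt_exp_lin H t)
  have e2 := ((hasDerivAt_id t).const_mul H).neg.exp
  have e3 := (hasDerivAt_exp_lin (1+H) t)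
  have e4 := ((hasDerivAt_id t).const_mul (1+H)).neg.exp
  have eg := g_hasDerivAt t
  have egd : HasDerivAt (fun s : ℝ => exp (s / 2) / 2 + exp (-(s / 2)) / 2)
      (exp (t / 2) / 4 - exp (-(t / 2)) / 4) t := by
    have h1 := (((hasDerivAt_id t).div_const 2).exp).div_const 2
    have h2 := ((((hasDerivAt_id t).div_const 2).neg).exp).div_const 2
    refine (h1.add h2).congr_deriv (Eq.symm ?_)
    simp
    ring
  have erp := eg.rpow_const (p := 2*H+1) (Or.inl hgpos.ne')
  have hprod := ((egd.mul_const (2*H+2)).mul erp)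
  have h := (((((e1.const_mul H).sub (e2.const_mul H)).const_mul (2+2*H)).sub
      (e3.const_mul (1+H))).add (e4.const_mul (1+H))).add hprod
  refine h.congr_deriv (Eq.symm ?_)
  unfold F2
  rw [show (2*H+1)-1 = 2*H by ring]
  simp
  ring

lemma continuous_F1 (H : ℝ) (hH0 : 0 < H) : Continuous (fun s => F1 H s) := by
  have hg : Continuous (fun s : ℝ => exp (s / 2) - exp (-(s / 2))) := by fun_prop
  have hrp : Continuous (fun s : ℝ => (exp (s / 2) - exp (-(s / 2))) ^ (2*H+1)) := by
    rw [continuous_iff_continuousAt]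
    intro x
    exact (Real.continuousAt_rpow_const _ _ (Or.inr (by linarith))).comp hg.continuousAt
  unfold F1
  fun_prop


theorem stmt_2 (H : ℝ) (hH0 : 0 < H) (hH1 : H ≤ 1 / 2) (p : ℝ)
    (hp : p = 2 * Real.sqrt ((1 - H ^ 2) / 3)) (t : ℝ) (ht : 0 ≤ t) :
    (3 * exp (-(p * t) / 2) - exp (-(3 * p * t) / 2)) / 2 ≤ dualCorrIFBM H t := by
  have hp0 : 0 ≤ p := by rw [hp]; positivity
  have hp2 : p^2 = 4*(1-H^2)/3 := by
    rw [hp, mul_pow, Real.sq_sqrt (by nlinarith : (0:ℝ) ≤ (1-H^2)/3)]; ring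
  have hc1 : (0:ℝ) < (2+4*H)⁻¹ := by
    apply inv_pos.2; linarith
  set W : ℝ → ℝ := fun s => (2+4*H)⁻¹ * F0 H s
      - (3 * exp (-(p * s) / 2) - exp (-(3 * p * s) / 2)) / 2 with hW_def
  set W1 : ℝ → ℝ := fun s => (2+4*H)⁻¹ * F1 H s
      - (3 * (-(p/2)) * exp (-(p * s) / 2) - (-(3*p/2)) * exp (-(3 * p * s) / 2)) / 2 with hW1_def
  set W2 : ℝ → ℝ := fun s => (2+4*H)⁻¹ * F2 H s
      - (3 * (p^2/4) * exp (-(p * s) / 2) - (9*p^2/4) * exp (-(3 * p * s) / 2)) / 2 with hW2_def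
  -- derivatives of the exponential tail terms
  have hra : ∀ s : ℝ, HasDerivAt (fun x : ℝ => exp (-(p * x) / 2)) (-(p/2) * exp (-(p * s) / 2)) s := by
    intro s
    have h := (((hasDerivAt_id s).const_mul p).neg.div_const 2).exp
    refine h.congr_deriv (Eq.symm ?_)
    simp only [id_eq, Pi.neg_apply]
    ring
  have hrb : ∀ s : ℝ, HasDerivAt (fun x : ℝ => exp (-(3 * p * x) / 2))
      (-(3*p/2) * exp (-(3 * p * s) / 2)) s := by
    intro s
    have h := (((hasDerivAt_id s).const_mul (3*p)).neg.div_const 2).exp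
    refine h.congr_deriv (Eq.symm ?_)
    simp only [id_eq, Pi.neg_apply]
    ring
  have hWd : ∀ s : ℝ, HasDerivAt W (W1 s) s := by
    intro s
    have h := ((hasDerivAt_F0 H hH0 s).const_mul ((2+4*H)⁻¹)).sub
      ((((hra s).const_mul 3).sub (hrb s)).div_const 2)
    refine h.congr_deriv (Eq.symm ?_)
    simp only [hW1_def]
    ring
  have hW1d : ∀ s : ℝ, 0 < s → HasDerivAt W1 (W2 s) s := by
    intro s hs
    have h := ((hasDerivAt_F1 H hH0 s hs).const_mul ((2+4*H)⁻¹)).sub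
      ((((hra s).const_mul (3 * (-(p/2)))).sub ((hrb s).const_mul (-(3*p/2)))).div_const 2)
    refine h.congr_deriv (Eq.symm ?_)
    simp only [hW2_def]
    ring
  -- initial values
  have h00 : ∀ q : ℝ, q ≠ 0 → (exp ((0:ℝ)/2) - exp (-((0:ℝ)/2))) ^ q = 0 := by
    intro q hq
    norm_num
    exact Real.zero_rpow hq
  have hW0 : W 0 = 0 := by
    simp only [hW_def, F0]
    rw [h00 (2*H+2) (by linarith)]
    norm_num
    have hne : (2+4*H) ≠ 0 := by linarith
    field_simp
    ring
  have hW10 : W1 0 = 0 := by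
    simp only [hW1_def, F1]
    rw [h00 (2*H+1) (by linarith)]
    norm_num
    ring
  -- the function u
  set U : ℝ → ℝ := fun s => exp (p*s/2) * (W1 s + (3*p/2) * W s) with hU_def
  have hUcont : Continuous U := by
    have hWc : Continuous W := by
      rw [continuous_iff_continuousAt]; exact fun s => (hWd s).continuousAt
    have hW1c : Continuous W1 := by
      simp only [hW1_def]
      have := continuous_F1 H hH0
      fun_prop
    simp only [hU_def]
    fun_prop
  have hUd : ∀ s : ℝ, 0 < s → HasDerivAt U
      (exp (p*s/2) * (W2 s + 2*p*W1 s + 3*p^2/4 * W s)) s := by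
    intro s hs
    have hlin : HasDerivAt (fun x : ℝ => p*x/2) (p/2) s := by
      simpa using (((hasDerivAt_id s).const_mul p).div_const 2)
    have h := (hlin.exp).mul ((hW1d s hs).add ((hWd s).const_mul (3*p/2)))
    refine h.congr_deriv (Eq.symm ?_)
    simp only [Pi.add_apply]
    ring
  have hcore : ∀ s : ℝ, 0 < s → 0 ≤ W2 s + 2*p*W1 s + 3*p^2/4 * W s := by
    intro s hs
    have h := core_pos H p s hH0 hH1 hp0 hp2 hs
    have heq : W2 s + 2*p*W1 s + 3*p^2/4 * W s
        = (2+4*H)⁻¹ * (F2 H s + 2*p*(F1 H s) + (1-H^2)*(F0 H s)) := by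
      simp only [hW_def, hW1_def, hW2_def]
      rw [show (1:ℝ)-H^2 = 3*p^2/4 by linarith [hp2]]
      ring
    rw [heq]
    exact mul_nonneg hc1.le h
  have hUmono : MonotoneOn U (Set.Ici 0) := by
    apply monotoneOn_of_deriv_nonneg (convex_Ici 0) hUcont.continuousOn
    · intro s hs
      rw [interior_Ici] at hs
      exact (hUd s hs).differentiableAt.differentiableWithinAt
    · intro s hs
      rw [interior_Ici] at hs
      rw [(hUd s hs).deriv]
      exact mul_nonneg (exp_pos _).le (hcore s hs)
  have hU0 : U 0 = 0 := by
    simp only [hU_def]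
    rw [hW0, hW10]
    ring
  have hUnn : ∀ s : ℝ, 0 ≤ s → 0 ≤ U s := by
    intro s hs
    have := hUmono (Set.self_mem_Ici) (Set.mem_Ici.2 hs) hs
    rw [hU0] at this
    exact this
  -- the function z
  set Z : ℝ → ℝ := fun s => exp (3*p*s/2) * W s with hZ_def
  have hZd : ∀ s : ℝ, HasDerivAt Z (exp (p*s) * U s) s := by
    intro s
    have hlin : HasDerivAt (fun x : ℝ => 3*p*x/2) (3*p/2) s := by
      simpa using (((hasDerivAt_id s).const_mul (3*p)).div_const 2)
    have h := (hlin.exp).mul (hWd s)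
    refine h.congr_deriv (Eq.symm ?_)
    simp only [hU_def]
    rw [show 3*p*s/2 = p*s + p*s/2 by ring, exp_add]
    ring
  have hZmono : MonotoneOn Z (Set.Ici 0) := by
    have hZc : Continuous Z := by
      rw [continuous_iff_continuousAt]; exact fun s => (hZd s).continuousAt
    apply monotoneOn_of_deriv_nonneg (convex_Ici 0) hZc.continuousOn
    · intro s hs
      exact (hZd s).differentiableAt.differentiableWithinAt
    · intro s hs
      rw [interior_Ici] at hs
      rw [(hZd s).deriv]
      exact mul_nonneg (exp_pos _).le (hUnn s hs.le)
  have hZ0 : Z 0 = 0 := by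
    simp only [hZ_def]
    rw [hW0]; ring
  have hZt : 0 ≤ Z t := by
    have := hZmono (Set.self_mem_Ici) (Set.mem_Ici.2 ht) ht
    rw [hZ0] at this
    exact this
  have hWt : 0 ≤ W t := by
    by_contra hneg
    push_neg at hneg
    have : Z t < 0 := by
      simp only [hZ_def]
      exact mul_neg_of_pos_of_neg (exp_pos _) hneg
    linarith
  have hdc : dualCorrIFBM H t = (2+4*H)⁻¹ * F0 H t := rfl
  simp only [hW_def] at hWt
  rw [hdc]
  linarith
end

section
/- For every t ≥ 0, (3 exp(-t/2) - exp(-3t/2))/2 ≤ 1/cosh(t/2). -/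
open Real

theorem stmt_3 (t : ℝ) (ht : 0 ≤ t) :
    (3 * exp (-t / 2) - exp (-(3 * t) / 2)) / 2 ≤ 1 / cosh (t / 2) := by
  have hx : 0 < exp (-t / 2) := exp_pos _
  have hy : 0 < exp (t / 2) := exp_pos _
  have hx1 : exp (-t / 2) ≤ 1 := exp_le_one_iff.mpr (by linarith)
  have hmul : exp (t / 2) * exp (-t / 2) = 1 := by
    rw [← exp_add]; ring_nf; exact exp_zero
  have h3 : exp (-(3 * t) / 2) = exp (-t / 2) ^ 3 := by
    rw [← exp_nat_mul]; ring_nf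
  have hcosh : cosh (t / 2) = (exp (t / 2) + exp (-t / 2)) / 2 := by
    rw [cosh_eq]; ring_nf
  have hcpos : 0 < cosh (t / 2) := cosh_pos _
  rw [div_le_div_iff₀ (by norm_num) hcpos, hcosh, h3]
  nlinarith [sq_nonneg (exp (-t / 2) ^ 2 - 1), sq_nonneg (exp (-t / 2)), mul_pos hx hx]
end

section
/- For every t ≥ 0, (3 exp(-t/2) - exp(-3t/2))/2 ≥ 1/cosh(t). -/
open Real

theorem stmt_4 (t : ℝ) (ht : 0 ≤ t) :
    1 / cosh t ≤ (3 * exp (-t / 2) - exp (-(3 * t) / 2)) / 2 := by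
  set x := exp (-t / 2) with hxdef
  have hx0 : 0 < x := exp_pos _
  have hx1 : x ≤ 1 := exp_le_one_iff.mpr (by linarith)
  have h3 : exp (-(3 * t) / 2) = x ^ 3 := by
    rw [hxdef, show -(3 * t) / 2 = (-t / 2) + (-t / 2) + (-t / 2) by ring, exp_add, exp_add]
    ring
  have het : exp (-t) = x ^ 2 := by
    rw [hxdef, show -t = (-t / 2) + (-t / 2) by ring, exp_add]; ring
  have het' : exp t * x ^ 2 = 1 := by
    rw [← het, ← exp_add]; simp
  have hcosh : cosh t = (exp t + x ^ 2) / 2 := by rw [cosh_eq, het]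
  have hc : (0:ℝ) < cosh t := cosh_pos t
  rw [h3, div_le_div_iff₀ hc (by norm_num), hcosh]
  have hpoly : 0 ≤ 3 + 2 * x - 2 * x ^ 3 - x ^ 4 := by nlinarith [pow_le_one₀ hx0.le hx1 (n := 3), pow_le_one₀ hx0.le hx1 (n := 4)]
  have hkey : 0 ≤ x * ((1 - x) ^ 2 * (3 + 2 * x - 2 * x ^ 3 - x ^ 4)) :=
    mul_nonneg hx0.le (mul_nonneg (sq_nonneg _) hpoly)
  nlinarith [het', exp_pos t, mul_pos hx0 hx0, sq_nonneg x]
end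

section
/- For every t ≥ 0, (3 exp(-t/2) - exp(-3t/2))/2 ≥ 1/cosh(sqrt(3) * t / 2). -/
open Real

theorem stmt_5 (t : ℝ) (ht : 0 ≤ t) :
    1 / cosh (Real.sqrt 3 * t / 2) ≤ (3 * exp (-t / 2) - exp (-(3 * t) / 2)) / 2 := by
  set s : ℝ := Real.sqrt 3 with hsdef
  have hs2 : s ^ 2 = 3 := Real.sq_sqrt (by norm_num)
  have hs0 : 0 ≤ s := Real.sqrt_nonneg 3
  have hs1 : 1 ≤ s := by nlinarith
  have hsle : s ≤ 2 := by nlinarith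
  set u : ℝ := exp (-t / 2) with hudef
  have hu0 : 0 < u := exp_pos _
  have hu1 : u ≤ 1 := by
    rw [hudef, ← Real.exp_zero]
    exact Real.exp_le_exp.mpr (by linarith)
  set v : ℝ := exp (-(s * t / 2)) with hvdef
  have hv0 : 0 < v := exp_pos _
  -- exp(-(3t)/2) = u^3
  have hu3 : exp (-(3 * t) / 2) = u ^ 3 := by
    rw [hudef, show -(3 * t) / 2 = (-t / 2) + (-t / 2) + (-t / 2) by ring,
      Real.exp_add, Real.exp_add]
    ring
  -- v = u ^ s (rpow)
  have hvu : v = u ^ s := by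
    rw [hvdef, hudef, ← Real.exp_mul, show -t / 2 * s = -(s * t / 2) by ring]
  -- Bernoulli bound: u^(s-1) ≤ 1 + (s-1)*(u-1)
  have hbern : u ^ (s - 1) ≤ 1 + (s - 1) * (u - 1) := by
    have := rpow_one_add_le_one_add_mul_self (s := u - 1) (by linarith) (p := s - 1)
      (by linarith) (by linarith)
    simpa using this
  set w : ℝ := u * (1 + (s - 1) * (u - 1)) with hwdef
  have hvw : v ≤ w := by
    have h1 : v = u * u ^ (s - 1) := by
      rw [hvu, show s = 1 + (s - 1) by ring, Real.rpow_add hu0, Real.rpow_one]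
      norm_num
    rw [h1, hwdef]
    exact mul_le_mul_of_nonneg_left hbern hu0.le
  set A : ℝ := 3 * u - u ^ 3 with hAdef
  have hA0 : 0 < A := by
    nlinarith [mul_nonneg (mul_nonneg hu0.le hu0.le) (sub_nonneg.mpr hu1),
      mul_nonneg hu0.le (sub_nonneg.mpr hu1)]
  have hA2 : A ≤ 2 := by
    nlinarith [mul_nonneg (sq_nonneg (u - 1)) hu0.le, sq_nonneg (u - 1)]
  have hw1 : w ≤ 1 := by
    nlinarith [mul_nonneg (mul_nonneg (by linarith : (0:ℝ) ≤ s - 1) hu0.le)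
      (sub_nonneg.mpr hu1)]
  have hw0 : 0 ≤ w := le_trans hv0.le hvw
  -- key polynomial inequality: A * (1 + w^2) - 4*w ≥ 0
  have hkeyid : A * (1 + w ^ 2) - 4 * w =
      u * (1 - u) ^ 3 * ((4 * s - 5) + (8 * s - 11) * u + 2 * u ^ 2 + (4 - 2 * s) * u ^ 3) := by
    rw [hAdef, hwdef]
    linear_combination (3 * u ^ 3 - 6 * u ^ 4 + 2 * u ^ 5 + 2 * u ^ 6 - u ^ 7) * hs2
  have hQ : 0 ≤ A * (1 + w ^ 2) - 4 * w := by
    rw [hkeyid]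
    have h1 : (0:ℝ) ≤ 1 - u := by linarith
    have hR : (0:ℝ) ≤ (4 * s - 5) + (8 * s - 11) * u + 2 * u ^ 2 + (4 - 2 * s) * u ^ 3 := by
      nlinarith [pow_nonneg hu0.le 2, pow_nonneg hu0.le 3]
    positivity
  -- hence A * (1 + v^2) ≥ 4*v
  have hkey : 4 * v ≤ A * (1 + v ^ 2) := by
    nlinarith [mul_nonneg (sub_nonneg.mpr hvw) (by nlinarith : (0:ℝ) ≤ 4 - A * (v + w))]
  -- cosh rewrite
  have hc : cosh (Real.sqrt 3 * t / 2) = (exp (s * t / 2) + v) / 2 := by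
    rw [Real.cosh_eq]
  have hE : exp (s * t / 2) * v = 1 := by
    rw [hvdef, ← Real.exp_add]
    simp
  have hcosh_pos : 0 < cosh (Real.sqrt 3 * t / 2) := Real.cosh_pos _
  rw [div_le_div_iff₀ hcosh_pos two_pos, hu3, ← hAdef, hc]
  have h5 : (A * (exp (s * t / 2) + v)) * v = A * (1 + v ^ 2) := by
    linear_combination A * hE
  have h6 : 4 * v ≤ (A * (exp (s * t / 2) + v)) * v := by rw [h5]; exact hkey
  have h4 : 4 ≤ A * (exp (s * t / 2) + v) := (mul_le_mul_iff_of_pos_right hv0).mp h6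
  linarith
end

section
/- Let 0 < H ≤ exp(-2)/2 and set p = ln(1/(2H))/H. Then for every t ≥ 0: cosh(H p t) - (1/2) * (2 sinh(p t / 2))^{2H} ≥ max(1 - t^{2H}, 0). -/
open Real

lemma exp_sextic' (x : ℝ) (hx : 0 ≤ x) :
    1 + x + x^2/2 + x^3/6 + x^4/24 + x^5/120 + x^6/720 ≤ exp x := by
  have h := Real.sum_le_exp_of_nonneg hx 7
  simp [Finset.sum_range_succ, Nat.factorial] at h
  linarith

lemma exp_quad' (x : ℝ) (hx : 0 ≤ x) : 1 + x + x^2/2 ≤ exp x := by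
  nlinarith [exp_sextic' x hx, pow_nonneg hx 3, pow_nonneg hx 4, pow_nonneg hx 5, pow_nonneg hx 6]

lemma helper_exp_ge (a c : ℝ) (ha : 0 ≤ a)
    (h : c ≤ 1 + a + a^2/2 + a^3/6 + a^4/24 + a^5/120 + a^6/720) : c ≤ exp a :=
  le_trans h (exp_sextic' a ha)

lemma helper_exp_neg (a c : ℝ) (hc : 0 < c) (ha : 0 ≤ a)
    (h : c⁻¹ ≤ 1 + a + a^2/2 + a^3/6 + a^4/24 + a^5/120 + a^6/720) : exp (-a) ≤ c := by
  rw [Real.exp_neg, inv_le_comm₀ (exp_pos a) hc]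
  exact helper_exp_ge a c⁻¹ ha h

lemma he2' : (7.389 : ℝ) ≤ exp 2 := by
  have h : exp (2:ℝ) = exp 1 * exp 1 := by rw [← Real.exp_add]; norm_num
  nlinarith [Real.exp_one_gt_d9]

lemma he3' : (20 : ℝ) ≤ exp 3 := by
  have h : exp (3:ℝ) = exp 1 * exp 1 * exp 1 := by rw [← Real.exp_add, ← Real.exp_add]; norm_num
  nlinarith [Real.exp_one_gt_d9]

lemma hconst' : (0.1517 : ℝ) ≤ log 2 - 4 * exp (-2) := by
  have h1 : exp (-2:ℝ) ≤ 0.13534 := by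
    rw [Real.exp_neg, inv_le_comm₀ (exp_pos _) (by norm_num)]
    nlinarith [he2']
  nlinarith [Real.log_two_gt_d9]

lemma sinh_le' (x : ℝ) : 2 * sinh x ≤ 2 * x * exp x := by
  rw [Real.sinh_eq]
  have h1 : exp (-x) = exp x * exp (-(2*x)) := by rw [← Real.exp_add]; ring_nf
  nlinarith [Real.add_one_le_exp (-(2*x)), Real.exp_pos x]

lemma claimF (L t u : ℝ) (hL2 : 2 ≤ L) (ht0 : 0 < t) (ht1 : t < 1)
    (htu : t = exp (-u)) (hu0 : 0 < u) (hB : 0.1517 ≤ L * t) :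
    2 * u ≤ exp (L * (1 - t)) := by
  have hy0 : 0 ≤ L * (1 - t) := by nlinarith
  rcases le_or_gt u (1/2) with h | h
  · have := Real.one_le_exp hy0; linarith
  rcases le_or_gt u 1 with h2 | h2
  · have hta : t ≤ 0.6067 := by
      rw [htu]
      refine le_trans (Real.exp_le_exp.mpr (by linarith : -u ≤ -(1/2))) ?_
      exact helper_exp_neg _ _ (by norm_num) (by norm_num) (by norm_num)
    have hy : 2 * (1 - 0.6067) ≤ L * (1 - t) := by nlinarith
    have h5 := Real.exp_le_exp.mpr hy
    have h6 : (2:ℝ) ≤ exp (2 * (1 - 0.6067)) := helper_exp_ge _ _ (by norm_num) (by norm_num)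
    linarith
  rcases le_or_gt u 1.6 with h3 | h3
  · have hta : t ≤ 0.3680 := by
      rw [htu]
      refine le_trans (Real.exp_le_exp.mpr (by linarith : -u ≤ -1)) ?_
      exact helper_exp_neg _ _ (by norm_num) (by norm_num) (by norm_num)
    have hy : 2 * (1 - 0.3680) ≤ L * (1 - t) := by nlinarith
    have h5 := Real.exp_le_exp.mpr hy
    have h6 : (3.2:ℝ) ≤ exp (2 * (1 - 0.3680)) := helper_exp_ge _ _ (by norm_num) (by norm_num)
    linarith
  rcases le_or_gt u 2.2 with h4 | h4
  · have hta : t ≤ 0.2022 := by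
      rw [htu]
      refine le_trans (Real.exp_le_exp.mpr (by linarith : -u ≤ -1.6)) ?_
      exact helper_exp_neg _ _ (by norm_num) (by norm_num) (by norm_num)
    have hy : 2 * (1 - 0.2022) ≤ L * (1 - t) := by nlinarith
    have h5 := Real.exp_le_exp.mpr hy
    have h6 : (4.4:ℝ) ≤ exp (2 * (1 - 0.2022)) := helper_exp_ge _ _ (by norm_num) (by norm_num)
    linarith
  rcases le_or_gt u 2.7 with h5' | h5'
  · have hta : t ≤ 0.1117 := by
      rw [htu]
      refine le_trans (Real.exp_le_exp.mpr (by linarith : -u ≤ -2.2)) ?_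
      exact helper_exp_neg _ _ (by norm_num) (by norm_num) (by norm_num)
    have hy : 2 * (1 - 0.1117) ≤ L * (1 - t) := by nlinarith
    have h5 := Real.exp_le_exp.mpr hy
    have h6 : (5.4:ℝ) ≤ exp (2 * (1 - 0.1117)) := helper_exp_ge _ _ (by norm_num) (by norm_num)
    linarith
  rcases le_or_gt u 3 with h6' | h6'
  · have hta : t ≤ 0.0687 := by
      rw [htu]
      refine le_trans (Real.exp_le_exp.mpr (by linarith : -u ≤ -2.7)) ?_
      exact helper_exp_neg _ _ (by norm_num) (by norm_num) (by norm_num)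
    have hy : 2 * (1 - 0.0687) ≤ L * (1 - t) := by nlinarith
    have h5 := Real.exp_le_exp.mpr hy
    have h6 : (6:ℝ) ≤ exp (2 * (1 - 0.0687)) := helper_exp_ge _ _ (by norm_num) (by norm_num)
    linarith
  · have hte : t * exp u = 1 := by rw [htu, ← Real.exp_add]; simp
    have hLu : 0.1517 * exp u ≤ L := by
      have h9 : L * t * exp u = L := by rw [mul_assoc, hte, mul_one]
      have h10 := mul_le_mul_of_nonneg_right hB (Real.exp_pos u).le
      linarith
    have hta : t ≤ 1/20 := by
      rw [htu]
      refine le_trans (Real.exp_le_exp.mpr (by linarith : -u ≤ -3)) ?_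
      rw [Real.exp_neg, inv_le_comm₀ (exp_pos _) (by norm_num)]
      linarith [he3']
    have hexpu : 20 * (u - 2) ≤ exp u := by
      have h7 : exp u = exp 3 * exp (u - 3) := by rw [← Real.exp_add]; ring_nf
      nlinarith [Real.add_one_le_exp (u - 3), he3', Real.exp_pos (u-3)]
    have h8 : 0.1517 * exp u * (19/20) ≤ L * (1 - t) := by
      apply mul_le_mul hLu (by linarith) (by norm_num)
      linarith
    have hy2 : 2.88 * (u - 2) ≤ L * (1 - t) := by linarith
    have hq := exp_quad' (L * (1 - t)) hy0
    have h28 : (0:ℝ) ≤ 2.88 * (u - 2) := by linarith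
    have h9 : (2.88 * (u-2))^2 ≤ (L * (1-t))^2 := by
      exact pow_le_pow_left₀ h28 hy2 2
    have hkey : 2*u ≤ 1 + (2.88*(u-2)) + (2.88*(u-2))^2/2 := by
      nlinarith [sq_nonneg (u-3)]
    linarith

theorem stmt_6 (H : ℝ) (hH0 : 0 < H) (hH : H ≤ exp (-2) / 2) (p : ℝ)
    (hp : p = log (1 / (2 * H)) / H) (t : ℝ) (ht : 0 ≤ t) :
    max (1 - t ^ (2 * H)) 0 ≤
      cosh (H * p * t) - (1 / 2) * (2 * sinh (p * t / 2)) ^ (2 * H) := by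
  set L : ℝ := log (1 / (2 * H)) with hLdef
  have h2H0 : (0:ℝ) < 2 * H := by linarith
  have h2Hpos : (0:ℝ) < 1 / (2 * H) := by positivity
  have hexpL : exp L = 1 / (2 * H) := by rw [hLdef]; exact Real.exp_log h2Hpos
  clear_value L
  have hL2 : 2 ≤ L := by
    rw [← Real.exp_le_exp, hexpL, le_div_iff₀ h2H0]
    calc exp 2 * (2 * H) = (2 * H) * exp 2 := by ring
    _ ≤ exp (-2) * exp 2 := by
        apply mul_le_mul_of_nonneg_right _ (exp_pos 2).le
        linarith
    _ = 1 := by rw [← Real.exp_add]; norm_num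
  have hL0 : (0:ℝ) < L := by linarith
  have hLp : H * p = L := by rw [hp]; field_simp
  have hp0 : 0 < p := by rw [hp]; positivity
  have h2He : exp (-L) = 2 * H := by
    rw [Real.exp_neg, hexpL]
    field_simp
  -- crude bound: D ≥ (1/2) exp(-(H p t))
  have key0 : (2 * sinh (p*t/2)) ^ (2*H) ≤ exp (H*p*t) := by
    have h1 : 2 * sinh (p*t/2) ≤ exp (p*t/2) := by
      rw [Real.sinh_eq]
      have := Real.exp_pos (-(p*t/2))
      linarith
    have h2 : (2 * sinh (p*t/2)) ^ (2*H) ≤ (exp (p*t/2)) ^ (2*H) := by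
      apply Real.rpow_le_rpow _ h1 h2H0.le
      positivity
    have h3 : (exp (p*t/2)) ^ (2*H) = exp (H*p*t) := by
      rw [Real.rpow_def_of_pos (exp_pos _), Real.log_exp]
      ring_nf
    rw [h3] at h2; exact h2
  have hD0 : (1/2) * exp (-(H*p*t)) ≤
      cosh (H*p*t) - (1/2) * (2 * sinh (p*t/2)) ^ (2*H) := by
    rw [Real.cosh_eq]
    linarith [key0]
  apply max_le _ (le_trans (by positivity) hD0)
  rcases le_or_gt 1 t with ht1 | ht1
  · have : (1:ℝ) ≤ t ^ (2*H) := Real.one_le_rpow ht1 h2H0.le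
    have h0 : (0:ℝ) ≤ (1/2) * exp (-(H*p*t)) := by positivity
    linarith
  rcases le_or_gt (L * t) (log 2 - 4 * exp (-2)) with hA | hB
  -- Regime A
  · have hclaimE : 2 * H * log p + L * t ≤ log 2 := by
      have hlogp : log p = log L - log H := by
        rw [hp]
        exact Real.log_div (ne_of_gt hL0) (ne_of_gt hH0)
      have hlogH : log 2 + log H = -L := by
        rw [← Real.log_mul (by norm_num) (ne_of_gt hH0), ← h2He, Real.log_exp]
      have hlogL : log L ≤ L - 1 := Real.log_le_sub_one_of_pos hL0
      have hlog2 : log 2 ≤ 1 := by linarith [Real.log_le_sub_one_of_pos (by norm_num : (0:ℝ) < 2)]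
      have hlogp2 : log p ≤ 2 * L := by rw [hlogp]; linarith
      have hstep : 2 * H * log p ≤ 2 * H * (2 * L) :=
        mul_le_mul_of_nonneg_left hlogp2 h2H0.le
      have hstep2 : 2 * H * (2 * L) ≤ 4 * exp (-2) := by
        rw [← h2He]
        have hq : exp (-L) * exp (L - 2) = exp (-2) := by
          rw [← Real.exp_add]; ring_nf
        nlinarith [Real.add_one_le_exp (L - 2), Real.exp_pos (-L), Real.exp_pos (L - 2)]
      linarith
    have hsinh : 2 * sinh (p*t/2) ≤ (p*t) * exp (p*t/2) := by
      have := sinh_le' (p*t/2)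
      calc 2 * sinh (p*t/2) ≤ 2 * (p*t/2) * exp (p*t/2) := this
      _ = (p*t) * exp (p*t/2) := by ring
    have hr : (2 * sinh (p*t/2)) ^ (2*H) ≤ ((p*t) * exp (p*t/2)) ^ (2*H) := by
      apply Real.rpow_le_rpow _ hsinh h2H0.le
      positivity
    have hexpand : ((p*t) * exp (p*t/2)) ^ (2*H)
        = exp (2 * H * log p + L * t) * t ^ (2*H) := by
      rw [Real.mul_rpow (by positivity) (exp_pos _).le,
          Real.mul_rpow hp0.le ht,
          Real.rpow_def_of_pos hp0,
          Real.rpow_def_of_pos (exp_pos _), Real.log_exp, ← hLp]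
      rw [mul_right_comm, ← Real.exp_add]
      congr 2
      ring
    have hexp2 : exp (2 * H * log p + L * t) ≤ 2 := by
      calc exp (2 * H * log p + L * t) ≤ exp (log 2) := Real.exp_le_exp.mpr hclaimE
      _ = 2 := Real.exp_log (by norm_num)
    have htH0 : (0:ℝ) ≤ t ^ (2*H) := Real.rpow_nonneg ht _
    have hfinal : (1/2) * (2 * sinh (p*t/2)) ^ (2*H) ≤ t ^ (2*H) := by
      have h1 : (2 * sinh (p*t/2)) ^ (2*H) ≤ 2 * t ^ (2*H) := by
        rw [hexpand] at hr
        calc (2 * sinh (p*t/2)) ^ (2*H) ≤ exp (2 * H * log p + L * t) * t ^ (2*H) := hr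
        _ ≤ 2 * t ^ (2*H) := mul_le_mul_of_nonneg_right hexp2 htH0
      linarith
    linarith [Real.one_le_cosh (H*p*t)]
  -- Regime B
  · have hc := hconst'
    have ht0 : 0 < t := by
      by_contra hcon
      push_neg at hcon
      nlinarith
    set u : ℝ := -log t with hudef
    have hlogt : log t = -u := by rw [hudef]; ring
    have htu : t = exp (-u) := by rw [← hlogt, Real.exp_log ht0]
    clear_value u
    have hu0 : 0 < u := by
      have := Real.log_neg ht0 ht1
      linarith
    have hF : 2 * u ≤ exp (L * (1 - t)) :=
      claimF L t u hL2 ht0 ht1 htu hu0 (by linarith)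
    have ht2H : t ^ (2*H) = exp (-(2*H*u)) := by
      rw [Real.rpow_def_of_pos ht0, hlogt]
      ring_nf
    have h1 : 1 - t ^ (2*H) ≤ 2*H*u := by
      rw [ht2H]
      linarith [Real.add_one_le_exp (-(2*H*u))]
    have hsplit : exp (-(L*t)) = exp (-L) * exp (L*(1-t)) := by
      rw [← Real.exp_add]; ring_nf
    have h2 : 2*H*u ≤ (1/2) * exp (-(H*p*t)) := by
      have hHpt : H*p*t = L*t := by rw [hLp]
      rw [hHpt, hsplit, ← h2He]
      nlinarith [hF, Real.exp_pos (-L)]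
    linarith
end

section
/- For every real a > 1 and every x with 0 < x < 1: x(1-x) + a x^2 ln x + (1-x)^2 ln(1-x) ≤ 0. -/
open Real

theorem stmt_7 (a : ℝ) (ha : 1 < a) (x : ℝ) (hx0 : 0 < x) (hx1 : x < 1) :
    x * (1 - x) + a * x ^ 2 * log x + (1 - x) ^ 2 * log (1 - x) ≤ 0 := by
  have h1 : log x ≤ x - 1 := Real.log_le_sub_one_of_pos hx0
  have h2 : log (1 - x) ≤ -x := by
    have := Real.log_le_sub_one_of_pos (by linarith : (0:ℝ) < 1 - x)
    linarith
  have hlx : log x < 0 := Real.log_neg hx0 hx1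
  have h3 : a * x ^ 2 * log x ≤ x ^ 2 * log x := by
    nlinarith [mul_nonneg (mul_nonneg (by linarith : (0:ℝ) ≤ a - 1) (sq_nonneg x)) (neg_nonneg.mpr hlx.le)]
  have h4 : x ^ 2 * log x ≤ x ^ 2 * (x - 1) :=
    mul_le_mul_of_nonneg_left h1 (sq_nonneg x)
  have h5 : (1 - x) ^ 2 * log (1 - x) ≤ (1 - x) ^ 2 * (-x) :=
    mul_le_mul_of_nonneg_left h2 (sq_nonneg _)
  nlinarith
end

section
/- For every x with 0 < x < 1: -x(1-x) + x^3 ln(1/x) + (1 - x^3) ln(1/(1-x)) > 0. -/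
open Real

theorem stmt_8 (x : ℝ) (hx0 : 0 < x) (hx1 : x < 1) :
    0 < -(x * (1 - x)) + x ^ 3 * log (1 / x) + (1 - x ^ 3) * log (1 / (1 - x)) := by
  have h1x : 0 < 1 - x := by linarith
  rw [one_div, one_div, Real.log_inv, Real.log_inv]
  have hlogx : log x ≤ x - 1 := Real.log_le_sub_one_of_pos hx0
  have hA : x ^ 3 * (1 - x) ≤ x ^ 3 * (-log x) := by
    apply mul_le_mul_of_nonneg_left (by linarith) (by positivity)
  have hx3 : 0 < 1 - x ^ 3 := by
    have : x ^ 3 < 1 := pow_lt_one₀ hx0.le hx1 (by norm_num)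
    linarith
  rcases le_or_gt x (1/2) with hc | hc
  · have habs : |x| < 1 := by rw [abs_of_pos hx0]; exact hx1
    have h := Real.abs_log_sub_add_sum_range_le habs 2
    rw [abs_of_pos hx0] at h
    have hsum : (∑ i ∈ Finset.range 2, x ^ (i + 1) / (i + 1)) = x + x ^ 2 / 2 := by
      norm_num [Finset.sum_range_succ]
    rw [hsum] at h
    have h2 := (abs_le.mp h).2
    have he : x ^ (2 + 1) / (1 - x) ≤ 2 * x ^ 3 := by
      rw [div_le_iff₀ h1x]; norm_num; nlinarith [pow_pos hx0 3]
    have hB : x + x ^ 2 / 2 - 2 * x ^ 3 ≤ -log (1 - x) := by linarith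
    have p2 : (1 - x ^ 3) * (x + x ^ 2 / 2 - 2 * x ^ 3) ≤ (1 - x ^ 3) * (-log (1 - x)) :=
      mul_le_mul_of_nonneg_left hB hx3.le
    nlinarith [sq_nonneg x, mul_pos hx0 hx0, sq_nonneg (x - 1/2), pow_pos hx0 3, pow_pos hx0 4]
  · have hlog1x : log (1 - x) ≤ log (1/2) := by
      apply Real.log_le_log h1x
      linarith
    have hl2 : log (1/2) = -log 2 := by
      rw [one_div, Real.log_inv]
    have h2 : (0.6931471803 : ℝ) < log 2 := Real.log_two_gt_d9
    have hB : (0.6931471803 : ℝ) ≤ -log (1 - x) := by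
      rw [hl2] at hlog1x; linarith
    have p2 : (1 - x ^ 3) * (0.6931471803 : ℝ) ≤ (1 - x ^ 3) * (-log (1 - x)) :=
      mul_le_mul_of_nonneg_left hB hx3.le
    nlinarith [sq_nonneg x, sq_nonneg (x - 1/2), mul_pos hx0 hx0]
end

section
/- For every x with 0 < x < 1: (1-x)(3-x) x^2 ln(1/x) + (1-x)^2 * ( x + (1-x)^2 ln(1-x) ) ≥ 0. -/
open Real

theorem stmt_9 (x : ℝ) (hx0 : 0 < x) (hx1 : x < 1) :
    0 ≤ (1 - x) * (3 - x) * x ^ 2 * log (1 / x)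
        + (1 - x) ^ 2 * (x + (1 - x) ^ 2 * log (1 - x)) := by
  have h1x : (0:ℝ) < 1 - x := by linarith
  have hlog1 : 0 ≤ log (1 / x) := by
    apply log_nonneg
    rw [le_div_iff₀ hx0]; linarith
  have hA : 0 ≤ (1 - x) * (3 - x) * x ^ 2 * log (1 / x) := by
    apply mul_nonneg _ hlog1
    nlinarith [sq_nonneg x, hx0.le, mul_pos (mul_pos h1x (show (0:ℝ) < 3 - x by linarith)) (pow_pos hx0 2)]
  -- key: -(1-x) * log (1-x) ≤ x
  have hkey : -log (1 - x) ≤ x / (1 - x) := by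
    have := log_le_sub_one_of_pos (show (0:ℝ) < 1 / (1 - x) by positivity)
    rw [log_div one_ne_zero (ne_of_gt h1x), log_one] at this
    have : 0 - log (1 - x) ≤ 1 / (1 - x) - 1 := this
    calc -log (1 - x) ≤ 1 / (1 - x) - 1 := by linarith
      _ = x / (1 - x) := by field_simp; ring
  have hkey2 : -((1 - x) * log (1 - x)) ≤ x := by
    have := mul_le_mul_of_nonneg_left hkey (le_of_lt h1x)
    rw [mul_div_cancel₀ _ (ne_of_gt h1x)] at this
    linarith [this]
  have hlogneg : log (1 - x) ≤ 0 := log_nonpos (by linarith) (by linarith)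
  have hsq : (1 - x) ^ 2 * log (1 - x) ≥ (1 - x) * log (1 - x) := by
    have h2 : (1 - x) ^ 2 ≤ 1 - x := by nlinarith
    nlinarith
  have hB : 0 ≤ x + (1 - x) ^ 2 * log (1 - x) := by linarith
  have : 0 ≤ (1 - x) ^ 2 * (x + (1 - x) ^ 2 * log (1 - x)) := by positivity
  linarith
end

section
/- For every H with 0 < H ≤ 1/2 and every t ≥ 0: (cosh t)^{2H} - (sinh t)^{2H} ≥ max(1 - t^{2H}, 0). -/
open Real

lemma sinh_le_mul_cosh {x : ℝ} (hx : 0 ≤ x) : Real.sinh x ≤ x * Real.cosh x := by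
  have h : MonotoneOn (fun y : ℝ => y * Real.cosh y - Real.sinh y) (Set.Ici 0) := by
    apply monotoneOn_of_deriv_nonneg (convex_Ici 0)
    · exact ((continuous_id.mul Real.continuous_cosh).sub Real.continuous_sinh).continuousOn
    · intro y hy
      exact (((hasDerivAt_id y).mul (Real.hasDerivAt_cosh y)).sub
        (Real.hasDerivAt_sinh y)).differentiableAt.differentiableWithinAt
    · intro y hy
      have hd : HasDerivAt (fun y : ℝ => y * Real.cosh y - Real.sinh y)
          (1 * Real.cosh y + y * Real.sinh y - Real.cosh y) y :=
        ((hasDerivAt_id y).mul (Real.hasDerivAt_cosh y)).sub (Real.hasDerivAt_sinh y)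
      rw [hd.deriv]
      have hy' : 0 < y := by simpa [interior_Ici] using hy
      have := Real.sinh_nonneg_iff.2 hy'.le
      nlinarith
  have := h (Set.self_mem_Ici) (Set.mem_Ici.2 hx) hx
  simpa using this

theorem stmt_10 (H : ℝ) (hH0 : 0 < H) (hH : H ≤ 1 / 2) (t : ℝ) (ht : 0 ≤ t) :
    max (1 - t ^ (2 * H)) 0 ≤ (cosh t) ^ (2 * H) - (sinh t) ^ (2 * H) := by
  set p := 2 * H with hp
  have hp0 : 0 < p := by positivity
  have hp1 : p ≤ 1 := by linarith
  have hs0 : 0 ≤ Real.sinh t := Real.sinh_nonneg_iff.2 ht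
  have hc1 : 1 ≤ Real.cosh t := Real.one_le_cosh t
  have hc0 : 0 ≤ Real.cosh t := by linarith
  have hnn : (Real.sinh t) ^ p ≤ (Real.cosh t) ^ p :=
    Real.rpow_le_rpow hs0 (Real.sinh_lt_cosh t).le hp0.le
  apply max_le _ (by linarith)
  -- main inequality: 1 - t^p ≤ cosh^p - sinh^p
  rcases le_or_gt 1 t with h1 | h1
  · have : 1 ≤ t ^ p := Real.one_le_rpow h1 hp0.le
    linarith
  · have hsb : (Real.sinh t) ^ p ≤ t ^ p * (Real.cosh t) ^ p := by
      rw [← Real.mul_rpow ht hc0]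
      exact Real.rpow_le_rpow hs0 (sinh_le_mul_cosh ht) hp0.le
    have htp : t ^ p ≤ 1 := Real.rpow_le_one ht h1.le hp0.le
    have hcp : 1 ≤ (Real.cosh t) ^ p := Real.one_le_rpow hc1 hp0.le
    nlinarith
end

section
/- For every H with 0 < H < 1 and every s ≥ 0, B_H(s) ≥ 0; that is, (2+2H)(exp(Hs) + exp(-Hs)) - exp((1+H)s) - exp(-(1+H)s) + (exp(s/2) - exp(-s/2))^{2H+2} ≥ 0. -/
open Real

theorem stmt_11 (H : ℝ) (hH0 : 0 < H) (hH1 : H < 1) (s : ℝ) (hs : 0 ≤ s) :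
    0 ≤ (2 + 2 * H) * (exp (H * s) + exp (-(H * s))) - exp ((1 + H) * s)
        - exp (-((1 + H) * s)) + (exp (s / 2) - exp (-(s / 2))) ^ (2 * H + 2) := by
  set x : ℝ := exp (s / 2) with hxdef
  have hx0 : (0:ℝ) < x := exp_pos _
  have hx1 : (1:ℝ) ≤ x := one_le_exp (by linarith)
  set p : ℝ := 2 * H + 2 with hpdef
  have hp1 : (1:ℝ) ≤ p := by simp [hpdef]; linarith
  -- rewrite all exponentials as rpow of x
  have e1 : exp (H * s) = x ^ (2 * H) := by
    rw [hxdef, ← exp_mul]; ring_nf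
  have e2 : exp (-(H * s)) = x ^ (-(2 * H)) := by
    rw [hxdef, ← exp_mul]; ring_nf
  have e3 : exp ((1 + H) * s) = x ^ p := by
    rw [hxdef, ← exp_mul, hpdef]; ring_nf
  have e4 : exp (-((1 + H) * s)) = x ^ (-p) := by
    rw [hxdef, ← exp_mul, hpdef]; ring_nf
  have e5 : exp (-(s / 2)) = x⁻¹ := by rw [hxdef, ← exp_neg]
  rw [e1, e2, e3, e4, e5]
  have hcoef : 2 + 2 * H = p := by rw [hpdef]; ring
  rw [hcoef]
  -- Bernoulli: (x - x⁻¹) ^ p ≥ x ^ p - p * x ^ (2H)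
  have hyx : x⁻¹ / x ≤ 1 := by
    rw [div_le_one hx0]
    calc x⁻¹ ≤ 1 := inv_le_one_of_one_le₀ hx1
    _ ≤ x := hx1
  have hbern : 1 - p * (x⁻¹ / x) ≤ (1 - x⁻¹ / x) ^ p := by
    have := one_add_mul_self_le_rpow_one_add (s := -(x⁻¹ / x)) (by linarith) hp1
    simpa [sub_eq_add_neg, mul_neg] using this
  have hbase : 0 ≤ 1 - x⁻¹ / x := by linarith
  have hxp : (0:ℝ) < x ^ p := rpow_pos_of_pos hx0 p
  have hfact : x - x⁻¹ = x * (1 - x⁻¹ / x) := by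
    field_simp
  have hkey : x ^ p - p * x ^ (2 * H) ≤ (x - x⁻¹) ^ p := by
    have h2 : x ^ p * (1 - p * (x⁻¹ / x)) ≤ x ^ p * (1 - x⁻¹ / x) ^ p :=
      mul_le_mul_of_nonneg_left hbern hxp.le
    have h3 : (x - x⁻¹) ^ p = x ^ p * (1 - x⁻¹ / x) ^ p := by
      rw [hfact, mul_rpow hx0.le hbase]
    have h4 : x ^ p * (x⁻¹ / x) = x ^ (2 * H) := by
      have : x⁻¹ / x = x ^ (-2 : ℝ) := by
        rw [rpow_neg hx0.le]
        rw [show ((2:ℝ)) = ((2:ℕ):ℝ) by norm_num, rpow_natCast]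
        field_simp
      rw [this, ← rpow_add hx0]
      congr 1
      rw [hpdef]; ring
    rw [h3]
    calc x ^ p - p * x ^ (2 * H) = x ^ p * (1 - p * (x⁻¹ / x)) := by
          rw [mul_sub, mul_one, ← mul_assoc, mul_comm (x ^ p) p, mul_assoc, h4]
    _ ≤ _ := h2
  -- x ^ (-p) ≤ p * x ^ (-(2H))
  have hneg : x ^ (-p) ≤ p * x ^ (-(2 * H)) := by
    have h1 : x ^ (-p) ≤ x ^ (-(2 * H)) :=
      rpow_le_rpow_of_exponent_le hx1 (by rw [hpdef]; linarith)
    have h2 : (0:ℝ) < x ^ (-(2 * H)) := rpow_pos_of_pos hx0 _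
    nlinarith
  rw [mul_add]
  clear_value x p
  linarith [hkey, hneg]
end

section
/- For every H with 0 < H < 1: the limit as t → 0+ of ( B_H(t) - 1 + (1 - H^2) t^2 / 2 ) / t^{2+2H} equals 1/(2+4H). -/
open Real Filter Topology


noncomputable def Eaux (x : ℝ) : ℝ := Real.exp x - ∑ i ∈ Finset.range 4, x ^ i / i.factorial

noncomputable def Aaux (H t : ℝ) : ℝ :=
  (2+2*H)*(Real.exp (H*t) + Real.exp (-(H*t))) - Real.exp ((1+H)*t) - Real.exp (-((1+H)*t))
    - (2+4*H) + (2+4*H)*((1-H^2)*t^2/2)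

lemma Aaux_eq (H t : ℝ) : Aaux H t =
    (2+2*H)*(Eaux (H*t) + Eaux (-(H*t))) - Eaux ((1+H)*t) - Eaux (-((1+H)*t)) := by
  simp only [Aaux, Eaux, Finset.sum_range_succ, Finset.sum_range_zero]
  norm_num [Nat.factorial]
  ring

lemma Eaux_bound {x : ℝ} (hx : |x| ≤ 1) : |Eaux x| ≤ |x|^4 * (5/96) := by
  have h := Real.exp_bound hx (by norm_num : 0 < 4)
  norm_num [Nat.factorial] at h ⊢
  convert h using 2
  rfl

lemma Aaux_abs_le {H : ℝ} (hH0 : 0 < H) (hH1 : H < 1) {t : ℝ} (ht0 : 0 < t) (ht2 : t ≤ 1/2) :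
    |Aaux H t| ≤ 10 * t ^ 4 := by
  have hHt : |H * t| ≤ 1 := by
    rw [abs_of_nonneg (by positivity)]; nlinarith
  have h1t : |(1 + H) * t| ≤ 1 := by
    rw [abs_of_nonneg (by positivity)]; nlinarith
  have e1 := Eaux_bound hHt
  have e2 := Eaux_bound (abs_neg (H * t) ▸ hHt)
  have e3 := Eaux_bound h1t
  have e4 := Eaux_bound (abs_neg ((1 + H) * t) ▸ h1t)
  rw [abs_neg] at e2 e4
  have hb1 : |H * t| ^ 4 ≤ t ^ 4 := by
    rw [abs_of_nonneg (by positivity)]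
    exact pow_le_pow_left₀ (by positivity) (by nlinarith) 4
  have hb3 : |(1 + H) * t| ^ 4 ≤ 16 * t ^ 4 := by
    rw [abs_of_nonneg (by positivity)]
    calc ((1 + H) * t) ^ 4 ≤ (2 * t) ^ 4 :=
          pow_le_pow_left₀ (by positivity) (by nlinarith) 4
      _ = 16 * t ^ 4 := by ring
  rw [Aaux_eq, abs_le]
  constructor <;>
    nlinarith [neg_abs_le (Eaux (H * t)), le_abs_self (Eaux (H * t)),
      neg_abs_le (Eaux (-(H * t))), le_abs_self (Eaux (-(H * t))),
      neg_abs_le (Eaux ((1 + H) * t)), le_abs_self (Eaux ((1 + H) * t)),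
      neg_abs_le (Eaux (-((1 + H) * t))), le_abs_self (Eaux (-((1 + H) * t))),
      pow_nonneg ht0.le 4]

theorem stmt_12 (H : ℝ) (hH0 : 0 < H) (hH1 : H < 1) :
    Tendsto (fun t : ℝ =>
        (dualCorrIFBM H t - 1 + (1 - H ^ 2) * t ^ 2 / 2) / t ^ (2 + 2 * H))
      (𝓝[>] 0) (𝓝 (1 / (2 + 4 * H))) := by
  have hne : (2 + 4 * H) ≠ 0 := by positivity
  -- part 1 : Aaux / t^(2+2H) → 0
  have h1 : Tendsto (fun t : ℝ => Aaux H t / t ^ (2 + 2 * H)) (𝓝[>] 0) (𝓝 0) := by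
    apply squeeze_zero_norm' (a := fun t : ℝ => 10 * t ^ (2 - 2 * H))
    · filter_upwards [Ioo_mem_nhdsGT_of_mem (by norm_num : (0:ℝ) ∈ Set.Ico 0 (1/2))] with t ht
      obtain ⟨ht0, ht2⟩ := ht
      have htp : (0:ℝ) < t ^ (2 + 2 * H) := Real.rpow_pos_of_pos ht0 _
      rw [Real.norm_eq_abs, abs_div, abs_of_pos htp, div_le_iff₀ htp]
      calc |Aaux H t| ≤ 10 * t ^ 4 := Aaux_abs_le hH0 hH1 ht0 ht2.le
        _ = 10 * t ^ (2 - 2 * H) * t ^ (2 + 2 * H) := by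
            rw [mul_assoc, ← Real.rpow_add ht0]
            rw [show (2 - 2 * H + (2 + 2 * H) : ℝ) = ((4:ℕ):ℝ) by push_cast; ring, Real.rpow_natCast]
    · have hc : Tendsto (fun t : ℝ => t ^ (2 - 2 * H)) (𝓝 0) (𝓝 0) := by
        have := (Real.continuousAt_rpow_const 0 (2 - 2 * H) (Or.inr (by linarith))).tendsto
        simpa [Real.zero_rpow (by linarith : (2:ℝ) - 2 * H ≠ 0)] using this
      simpa using (hc.mono_left nhdsWithin_le_nhds).const_mul 10
  -- part 2 : ((exp(t/2) - exp(-(t/2)))/t)^(2+2H) → 1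
  have hd : HasDerivAt (fun t : ℝ => exp (t / 2) - exp (-(t / 2))) 1 0 := by
    have hid : HasDerivAt (fun t : ℝ => t / 2) (1 / 2) 0 := (hasDerivAt_id 0).div_const 2
    have e1 := (Real.hasDerivAt_exp ((0:ℝ) / 2)).comp 0 hid
    have e2 := (Real.hasDerivAt_exp (-((0:ℝ) / 2))).comp 0 hid.neg
    have := e1.sub e2
    norm_num at this
    exact this
  have hslope : Tendsto (fun t : ℝ => (exp (t / 2) - exp (-(t / 2))) / t) (𝓝[>] 0) (𝓝 1) := by
    have := (hasDerivAt_iff_tendsto_slope.mp hd).mono_left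
      (nhdsWithin_mono 0 (by intro x hx; exact ne_of_gt hx))
    apply this.congr'
    filter_upwards [self_mem_nhdsWithin] with t ht
    simp [slope_def_field]
  have h2 : Tendsto (fun t : ℝ => ((exp (t / 2) - exp (-(t / 2))) / t) ^ (2 + 2 * H))
      (𝓝[>] 0) (𝓝 1) := by
    have hc : ContinuousAt (fun x : ℝ => x ^ (2 + 2 * H)) 1 :=
      Real.continuousAt_rpow_const 1 _ (Or.inl one_ne_zero)
    have := hc.tendsto.comp hslope
    simpa [Real.one_rpow, Function.comp_def] using this
  -- combine
  have hcomb := ((h1.add h2).const_mul ((2 + 4 * H)⁻¹))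
  rw [zero_add] at hcomb
  have hval : (2 + 4 * H)⁻¹ * 1 = 1 / (2 + 4 * H) := by ring
  rw [hval] at hcomb
  apply hcomb.congr'
  filter_upwards [self_mem_nhdsWithin] with t ht
  have ht0 : 0 < t := ht
  have htp : (0:ℝ) < t ^ (2 + 2 * H) := Real.rpow_pos_of_pos ht0 _
  have hS : 0 ≤ exp (t / 2) - exp (-(t / 2)) := by
    have : -(t/2) ≤ t/2 := by linarith
    simpa using Real.exp_le_exp.mpr this
  have hSp : (exp (t / 2) - exp (-(t / 2))) ^ (2 * H + 2)
      = ((exp (t / 2) - exp (-(t / 2))) / t) ^ (2 + 2 * H) * t ^ (2 + 2 * H) := by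
    rw [show (2 * H + 2 : ℝ) = 2 + 2 * H by ring, Real.div_rpow hS ht0.le,
      div_mul_cancel₀ _ (ne_of_gt htp)]
  simp only [dualCorrIFBM, Aaux, hSp]
  field_simp
  ring
end

section
/- For every H with 0 < H < 1/2: the limit as t → ∞ of exp(Ht) * B_H(t) equals (1+H)/(1+2H). -/
open Real Filter Topology

/-- For `0 < x < 1` and `p = 2H+2`, `0 ≤ (1-x)^p - 1 + p x ≤ p (p-1) x²`. -/
lemma psi_bounds (H : ℝ) (hH0 : 0 < H) {x : ℝ} (hx0 : 0 < x) (hx1 : x < 1) :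
    0 ≤ (1 - x) ^ (2 * H + 2) - 1 + (2 * H + 2) * x ∧
      (1 - x) ^ (2 * H + 2) - 1 + (2 * H + 2) * x ≤ (2 * H + 2) * (2 * H + 1) * x ^ 2 := by
  set p : ℝ := 2 * H + 2 with hp
  have hx1' : (0:ℝ) < 1 - x := by linarith
  have hs : (-1 : ℝ) ≤ -x := by linarith
  have hq1 : (1 : ℝ) ≤ p - 1 := by rw [hp]; linarith
  have hp1 : (1 : ℝ) ≤ p := by rw [hp]; linarith
  -- Bernoulli lower bound: 1 - p x ≤ (1-x)^p
  have hlow : 1 + p * (-x) ≤ (1 + (-x)) ^ p := one_add_mul_self_le_rpow_one_add hs hp1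
  constructor
  · have : 1 + -x = 1 - x := by ring
    rw [this] at hlow; nlinarith [hlow]
  -- upper bound: key inequality (1-x)^(p-1) * (1 + (p-1) x) ≤ 1
  · have hb1 : 1 + (p - 1) * x ≤ (1 + x) ^ (p - 1) :=
      one_add_mul_self_le_rpow_one_add (by linarith) hq1
    have hprod : (1 - x) ^ (p - 1) * (1 + x) ^ (p - 1) ≤ 1 := by
      rw [← Real.mul_rpow (by linarith) (by linarith)]
      have h1 : (1 - x) * (1 + x) = 1 - x ^ 2 := by ring
      rw [h1]
      exact Real.rpow_le_one (by nlinarith) (by nlinarith) (by linarith)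
    have hpos : (0:ℝ) ≤ (1 - x) ^ (p - 1) := Real.rpow_nonneg (by linarith) _
    have hkey : (1 - x) ^ (p - 1) * (1 + (p - 1) * x) ≤ 1 :=
      le_trans (mul_le_mul_of_nonneg_left hb1 hpos) hprod
    -- (1-x)^p = (1-x)^(p-1) * (1-x)
    have hsplit : (1 - x) ^ p = (1 - x) ^ (p - 1) * (1 - x) := by
      rw [← Real.rpow_add_one (ne_of_gt hx1')]
      ring_nf
    -- step: ψ(x) ≤ x ψ'(x) = p x (1 - (1-x)^(p-1))
    have hstep : (1 - x) ^ p - 1 + p * x ≤ p * x * (1 - (1 - x) ^ (p - 1)) := by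
      rw [hsplit]; nlinarith [hkey]
    -- Bernoulli with exponent p-1: 1 - (p-1) x ≤ (1-x)^(p-1)
    have hb2 : 1 + (p - 1) * (-x) ≤ (1 + (-x)) ^ (p - 1) :=
      one_add_mul_self_le_rpow_one_add hs hq1
    have h1x : (1:ℝ) + -x = 1 - x := by ring
    rw [h1x] at hb2
    have hpx : (0:ℝ) < p * x := by positivity
    have : p * x * (1 - (1 - x) ^ (p - 1)) ≤ p * x * ((p - 1) * x) := by
      apply mul_le_mul_of_nonneg_left _ (le_of_lt hpx)
      nlinarith [hb2]
    have hfin : p * x * ((p - 1) * x) = p * (p - 1) * x ^ 2 := by ring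
    have hp1' : p - 1 = 2 * H + 1 := by rw [hp]; ring
    calc (1 - x) ^ p - 1 + p * x ≤ p * x * (1 - (1 - x) ^ (p - 1)) := hstep
      _ ≤ p * x * ((p - 1) * x) := this
      _ = (2 * H + 2) * (2 * H + 1) * x ^ 2 := by rw [hfin, hp1', hp]

/-- The error term tends to `0`. -/
lemma err_tendsto (H : ℝ) (hH0 : 0 < H) (hH1 : H < 1 / 2) :
    Tendsto (fun x : ℝ => ((1 - x) ^ (2 * H + 2) - 1 + (2 * H + 2) * x) * x ^ (-(1 + 2 * H)))
      (𝓝[>] (0:ℝ)) (𝓝 0) := by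
  have hmem : Set.Ioo (0:ℝ) 1 ∈ 𝓝[>] (0:ℝ) :=
    Ioo_mem_nhdsGT_of_mem ⟨le_refl 0, one_pos⟩
  apply squeeze_zero'
  · filter_upwards [hmem] with x hx
    have h := (psi_bounds H hH0 hx.1 hx.2).1
    exact mul_nonneg h (Real.rpow_nonneg (le_of_lt hx.1) _)
  · show ∀ᶠ x in 𝓝[>] (0:ℝ), _ ≤ (fun x : ℝ =>
      (2 * H + 2) * (2 * H + 1) * x ^ (1 - 2 * H)) x
    filter_upwards [hmem] with x hx
    have h := (psi_bounds H hH0 hx.1 hx.2).2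
    have hrw : x ^ 2 * x ^ (-(1 + 2 * H)) = x ^ (1 - 2 * H) := by
      rw [← Real.rpow_natCast x 2, ← Real.rpow_add hx.1]
      congr 1
      push_cast
      ring
    calc ((1 - x) ^ (2 * H + 2) - 1 + (2 * H + 2) * x) * x ^ (-(1 + 2 * H))
        ≤ (2 * H + 2) * (2 * H + 1) * x ^ 2 * x ^ (-(1 + 2 * H)) := by
          exact mul_le_mul_of_nonneg_right h (Real.rpow_nonneg (le_of_lt hx.1) _)
      _ = (2 * H + 2) * (2 * H + 1) * x ^ (1 - 2 * H) := by
          rw [mul_assoc, hrw]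
  · have hq : (0:ℝ) < 1 - 2 * H := by linarith
    have hcont : Tendsto (fun x : ℝ => x ^ (1 - 2 * H)) (𝓝 0) (𝓝 ((0:ℝ) ^ (1 - 2 * H))) :=
      (Real.continuousAt_rpow_const 0 (1 - 2 * H) (Or.inr (le_of_lt hq)))
    rw [Real.zero_rpow (ne_of_gt hq)] at hcont
    have hmul : Tendsto (fun x : ℝ => (2 * H + 2) * (2 * H + 1) * x ^ (1 - 2 * H))
        (𝓝[>] (0:ℝ)) (𝓝 ((2 * H + 2) * (2 * H + 1) * 0)) :=
      tendsto_const_nhds.mul (hcont.mono_left nhdsWithin_le_nhds)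
    simpa using hmul

theorem stmt_13 (H : ℝ) (hH0 : 0 < H) (hH1 : H < 1 / 2) :
    Tendsto (fun t : ℝ => exp (H * t) * dualCorrIFBM H t) atTop
      (𝓝 ((1 + H) / (1 + 2 * H))) := by
  set c : ℝ := (2 + 4 * H)⁻¹ with hc
  -- the simplified form
  set g : ℝ → ℝ := fun x =>
    c * ((2 + 2 * H) - x +
      ((1 - x) ^ (2 * H + 2) - 1 + (2 * H + 2) * x) * x ^ (-(1 + 2 * H))) with hg
  have hxlim : Tendsto (fun t : ℝ => exp (-t)) atTop (𝓝[>] (0:ℝ)) :=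
    tendsto_nhdsWithin_of_tendsto_nhds_of_eventually_within _
      Real.tendsto_exp_neg_atTop_nhds_zero
      (Eventually.of_forall fun t => Real.exp_pos _)
  have hglim : Tendsto g (𝓝[>] (0:ℝ)) (𝓝 ((1 + H) / (1 + 2 * H))) := by
    have h1 : Tendsto (fun x : ℝ => (2 + 2 * H) - x +
        ((1 - x) ^ (2 * H + 2) - 1 + (2 * H + 2) * x) * x ^ (-(1 + 2 * H)))
        (𝓝[>] (0:ℝ)) (𝓝 ((2 + 2 * H) - 0 + 0)) :=
      (tendsto_const_nhds.sub (tendsto_id.mono_left nhdsWithin_le_nhds)).add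
        (err_tendsto H hH0 hH1)
    have h2 := (tendsto_const_nhds (x := c)).mul h1
    have h3 : c * ((2 + 2 * H) - 0 + 0) = (1 + H) / (1 + 2 * H) := by
      rw [hc]
      field_simp
      ring
    rw [h3] at h2
    exact h2
  have hcomp : Tendsto (fun t : ℝ => g (exp (-t))) atTop (𝓝 ((1 + H) / (1 + 2 * H))) :=
    hglim.comp hxlim
  apply hcomp.congr'
  filter_upwards [eventually_gt_atTop (0:ℝ)] with t ht
  -- prove the identity  g (exp (-t)) = exp (H t) * dualCorrIFBM H t
  have hx0 : (0:ℝ) < exp (-t) := Real.exp_pos _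
  have hx1 : exp (-t) < 1 := Real.exp_lt_one_iff.mpr (by linarith)
  -- rewrite the rpow term
  have e1 : exp (t / 2) - exp (-(t / 2)) = exp (t / 2) * (1 - exp (-t)) := by
    rw [mul_sub, mul_one, ← Real.exp_add]
    ring_nf
  have e2 : (exp (t / 2) * (1 - exp (-t))) ^ (2 * H + 2)
      = exp ((1 + H) * t) * (1 - exp (-t)) ^ (2 * H + 2) := by
    rw [Real.mul_rpow (le_of_lt (Real.exp_pos _)) (by linarith),
      ← Real.exp_mul]
    ring_nf
  have e3 : exp (-t) ^ (-(1 + 2 * H)) = exp ((1 + 2 * H) * t) := by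
    rw [← Real.exp_mul]
    ring_nf
  -- express all exponentials via E := exp t, E1 := exp (H * t)
  have hE : (0:ℝ) < exp t := Real.exp_pos _
  have hE1 : (0:ℝ) < exp (H * t) := Real.exp_pos _
  have f1 : exp ((1 + H) * t) = exp t * exp (H * t) := by
    rw [← Real.exp_add]; ring_nf
  have f2 : exp (-((1 + H) * t)) = (exp t * exp (H * t))⁻¹ := by
    rw [Real.exp_neg, f1]
  have f3 : exp (-(H * t)) = (exp (H * t))⁻¹ := Real.exp_neg _
  have f4 : exp ((1 + 2 * H) * t) = exp t * exp (H * t) ^ 2 := by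
    rw [sq, ← Real.exp_add, ← Real.exp_add]; ring_nf
  have f5 : exp (-t) = (exp t)⁻¹ := Real.exp_neg _
  simp only [hg, dualCorrIFBM]
  rw [e1, e2, e3, ← hc, f1, f2, f3, f4, f5]
  set A : ℝ := (1 - (exp t)⁻¹) ^ (2 * H + 2) with hA
  field_simp
  ring
end

section
/- Let 0 < H < 1/2 and define g(t) = 1 - (t^{1+2H} + (1-t)^{1+2H})/(1+2H) for t ∈ [0,1]. Then for all t ∈ [0,1]: g(0) ≤ g(t) ≤ g(1/2), and moreover H < g(t) < 2H * ln(2e). -/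
open Real

theorem stmt_14 (H : ℝ) (hH0 : 0 < H) (hH1 : H < 1 / 2)
    (g : ℝ → ℝ)
    (hg : ∀ t, g t = 1 - (t ^ (1 + 2 * H) + (1 - t) ^ (1 + 2 * H)) / (1 + 2 * H))
    (t : ℝ) (ht : t ∈ Set.Icc (0 : ℝ) 1) :
    (g 0 ≤ g t ∧ g t ≤ g (1 / 2)) ∧ (H < g t ∧ g t < 2 * H * log (2 * exp 1)) := by
  obtain ⟨ht0, ht1⟩ := ht
  set p : ℝ := 1 + 2 * H with hp
  have hp1 : 1 < p := by simp only [hp]; linarith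
  have hp0 : 0 < p := by linarith
  have hp2 : p < 2 := by simp only [hp]; linarith
  have hlog2 : (0:ℝ) < log 2 := Real.log_pos (by norm_num)
  -- aux : x^p ≤ x on [0,1]
  have aux : ∀ x : ℝ, 0 ≤ x → x ≤ 1 → x ^ p ≤ x := by
    intro x hx0 hx1
    rcases eq_or_lt_of_le hx0 with h | h
    · rw [← h, Real.zero_rpow hp0.ne']
    · calc x ^ p ≤ x ^ (1:ℝ) := Real.rpow_le_rpow_of_exponent_ge h hx1 hp1.le
        _ = x := Real.rpow_one x
  have hA : t ^ p + (1 - t) ^ p ≤ 1 := by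
    have h1 := aux t ht0 ht1
    have h2 := aux (1 - t) (by linarith) (by linarith)
    linarith
  have hconv := convexOn_rpow hp1.le
  have hB : 2 * (1/2 : ℝ) ^ p ≤ t ^ p + (1 - t) ^ p := by
    have hc := hconv.2 (Set.mem_Ici.mpr ht0)
      (Set.mem_Ici.mpr (by linarith : (0:ℝ) ≤ 1 - t))
      (by norm_num : (0:ℝ) ≤ 1/2) (by norm_num : (0:ℝ) ≤ 1/2) (by norm_num)
    simp only [smul_eq_mul] at hc
    have heq : (1/2 : ℝ) * t + 1/2 * (1 - t) = 1/2 := by ring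
    rw [heq] at hc
    linarith
  have hg0 : g 0 = 1 - 1 / p := by
    rw [hg]
    norm_num [Real.zero_rpow hp0.ne', Real.one_rpow]
  have hgh : g (1/2) = 1 - 2 * (1/2 : ℝ) ^ p / p := by
    rw [hg]
    norm_num
    ring
  have hgt : g t = 1 - (t ^ p + (1 - t) ^ p) / p := hg t
  have h1 : g 0 ≤ g t := by
    rw [hg0, hgt]
    have : (t ^ p + (1 - t) ^ p) / p ≤ 1 / p := by gcongr
    linarith
  have h2 : g t ≤ g (1/2) := by
    rw [hgt, hgh]
    have : 2 * (1/2 : ℝ) ^ p / p ≤ (t ^ p + (1 - t) ^ p) / p := by gcongr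
    linarith
  refine ⟨⟨h1, h2⟩, ?_, ?_⟩
  · -- H < g t
    have hinv : 1 / p * p = 1 := one_div_mul_cancel hp0.ne'
    have : H < g 0 := by
      rw [hg0]
      nlinarith [hinv, mul_pos hH0 hH0, hp0]
    linarith
  · -- g t < 2 H log (2 e)
    have hexp : 1 - 2 * H * log 2 ≤ (1/2 : ℝ) ^ (2 * H) := by
      rw [Real.rpow_def_of_pos (by norm_num : (0:ℝ) < 1/2)]
      have hl : Real.log (1/2 : ℝ) = - Real.log 2 := by
        rw [one_div, Real.log_inv]
      rw [hl]
      have := Real.add_one_le_exp (-Real.log 2 * (2 * H))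
      nlinarith
    have hsplit : 2 * (1/2 : ℝ) ^ p = (1/2 : ℝ) ^ (2 * H) := by
      rw [hp, add_comm, Real.rpow_add (by norm_num : (0:ℝ) < 1/2), Real.rpow_one]
      ring
    have hle : 2 * Real.log (2 * exp 1) = 2 * (log 2 + 1) := by
      rw [Real.log_mul (by norm_num) (Real.exp_ne_zero 1), Real.log_exp]
    have hkey : 1 - (1 - 2 * H * log 2) / p < 2 * H * (log 2 + 1) := by
      have hstep : 1 - 2 * H * (log 2 + 1) < (1 - 2 * H * log 2) / p := by
        rw [lt_div_iff₀ hp0, hp]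
        nlinarith [mul_pos hH0 hH0, hlog2, mul_pos (mul_pos hH0 hH0) hlog2]
      linarith
    have hlog2e : Real.log (2 * exp 1) = log 2 + 1 := by
      rw [Real.log_mul (by norm_num) (Real.exp_ne_zero 1), Real.log_exp]
    calc g t ≤ g (1/2) := h2
      _ = 1 - 2 * (1/2:ℝ) ^ p / p := hgh
      _ ≤ 1 - (1 - 2 * H * log 2) / p := by
          rw [hsplit]
          have : (1 - 2 * H * log 2) / p ≤ (1/2:ℝ) ^ (2*H) / p := by gcongr
          linarith
      _ < 2 * H * (log 2 + 1) := hkey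
      _ = 2 * H * log (2 * exp 1) := by rw [hlog2e]
end

section
/- For every α with 0 < α < 1 and every t with α ≤ t ≤ 1: α^{1-t} ≤ t^{1-α}. -/
open Real

theorem stmt_15 (α : ℝ) (hα0 : 0 < α) (hα1 : α < 1) (t : ℝ) (ht0 : α ≤ t) (ht1 : t ≤ 1) :
    α ^ (1 - t) ≤ t ^ (1 - α) := by
  set l : ℝ := (1 - t) / (1 - α) with hl
  have h1α : (0:ℝ) < 1 - α := by linarith
  have hl0 : 0 ≤ l := div_nonneg (by linarith) h1α.le
  have hl1 : l ≤ 1 := by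
    rw [hl, div_le_one h1α]; linarith
  have hsum : l + (1 - l) = 1 := by ring
  have key : α ^ l ≤ t := by
    have := Real.geom_mean_le_arith_mean2_weighted hl0 (by linarith : (0:ℝ) ≤ 1 - l)
      hα0.le zero_le_one hsum
    calc α ^ l = α ^ l * (1:ℝ) ^ (1 - l) := by rw [Real.one_rpow, mul_one]
      _ ≤ l * α + (1 - l) * 1 := this
      _ = t := by
        have hm := div_mul_cancel₀ (1 - t) h1α.ne'
        rw [← hl] at hm
        linarith
  have h2 : (α ^ l) ^ (1 - α) ≤ t ^ (1 - α) :=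
    Real.rpow_le_rpow (Real.rpow_nonneg hα0.le l) key h1α.le
  calc α ^ (1 - t) = (α ^ l) ^ (1 - α) := by
        rw [← Real.rpow_mul hα0.le]
        congr 1
        rw [hl, div_mul_cancel₀ (1 - t) h1α.ne']
    _ ≤ t ^ (1 - α) := h2
end

section
/- For every α with 0 < α ≤ exp(-2) and every t with α ≤ t ≤ 1: (1/2) α^t + t^α - 1 ≥ α/2. -/
open Real

theorem stmt_16 (α : ℝ) (hα0 : 0 < α) (hα1 : α ≤ exp (-2)) (t : ℝ)
    (ht0 : α ≤ t) (ht1 : t ≤ 1) :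
    α / 2 ≤ (1 / 2) * α ^ t + t ^ α - 1 := by
  have hα1' : α < 1 := lt_of_le_of_lt hα1 (by
    calc exp (-2) < exp 0 := exp_lt_exp.2 (by norm_num)
      _ = 1 := exp_zero)
  have hlogα : Real.log α ≤ -2 := by
    have := Real.log_le_log hα0 hα1
    rwa [Real.log_exp] at this
  set L : ℝ := -Real.log α with hLdef
  have hL2 : 2 ≤ L := by simp only [hLdef]; linarith
  have hL0 : 0 < L := lt_of_lt_of_le (by norm_num) hL2
  have hαexp : α = exp (-L) := by
    simp only [hLdef, neg_neg]
    rw [Real.exp_log hα0]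
  set f : ℝ → ℝ := fun x => (1/2) * exp (x * Real.log α) + exp (α * Real.log x) - 1 with hf
  have hanti : AntitoneOn f (Set.Icc α 1) := by
    apply antitoneOn_of_deriv_nonpos (convex_Icc α 1)
    · apply ContinuousOn.sub _ continuousOn_const
      apply ContinuousOn.add
      · exact (continuous_const.mul (Real.continuous_exp.comp
          (continuous_id.mul continuous_const))).continuousOn
      · apply ContinuousOn.rexp
        apply ContinuousOn.mul continuousOn_const
        apply ContinuousOn.log continuousOn_id
        intro x hx
        exact ne_of_gt (lt_of_lt_of_le hα0 hx.1)
    all_goals rw [interior_Icc]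
    · intro x hx
      have hx0 : 0 < x := lt_trans hα0 hx.1
      have h1 : HasDerivAt (fun y : ℝ => y * Real.log α) (Real.log α) x := by
        simpa using (hasDerivAt_id x).mul_const (Real.log α)
      have h2 : HasDerivAt (fun y : ℝ => α * Real.log y) (α * x⁻¹) x :=
        (Real.hasDerivAt_log hx0.ne').const_mul α
      have hd : HasDerivAt f
          ((1/2) * (exp (x * Real.log α) * Real.log α) + exp (α * Real.log x) * (α * x⁻¹)) x :=
        ((h1.exp.const_mul (1/2)).add h2.exp).sub_const 1
      exact hd.differentiableAt.differentiableWithinAt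
    · intro x hx
      have hx0 : 0 < x := lt_trans hα0 hx.1
      have h1 : HasDerivAt (fun y : ℝ => y * Real.log α) (Real.log α) x := by
        simpa using (hasDerivAt_id x).mul_const (Real.log α)
      have h2 : HasDerivAt (fun y : ℝ => α * Real.log y) (α * x⁻¹) x :=
        (Real.hasDerivAt_log hx0.ne').const_mul α
      have hd : HasDerivAt f
          ((1/2) * (exp (x * Real.log α) * Real.log α) + exp (α * Real.log x) * (α * x⁻¹)) x :=
        ((h1.exp.const_mul (1/2)).add h2.exp).sub_const 1
      rw [hd.deriv]
      -- key inequality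
      set s : ℝ := -Real.log x with hsdef
      have hs0 : 0 < s := by
        simp only [hsdef]
        have : Real.log x < 0 := Real.log_neg hx0 hx.2
        linarith
      have hsL : s < L := by
        simp only [hsdef, hLdef]
        have : Real.log α < Real.log x := Real.log_lt_log hα0 hx.1
        linarith
      have hxexp : x = exp (-s) := by
        simp only [hsdef, neg_neg]; rw [Real.exp_log hx0]
      -- chord inequality from convexity of exp
      have ha : (0:ℝ) ≤ 1 - s / L := by
        have : s / L ≤ 1 := (div_le_one hL0).2 hsL.le
        linarith
      have hb : (0:ℝ) ≤ s / L := by positivity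
      have hab : (1 - s / L) + s / L = 1 := by ring
      have hchord : exp (-s) ≤ (1 - s / L) * exp 0 + (s / L) * exp (-L) := by
        have h := convexOn_exp.2 (Set.mem_univ (0:ℝ)) (Set.mem_univ (-L)) ha hb hab
        simp only [smul_eq_mul] at h
        rwa [show (1 - s / L) * 0 + s / L * -L = -s from by field_simp; ring] at h
      have hkey : (1 - α) * s + L * exp (-s) ≤ L := by
        have h2' := mul_le_mul_of_nonneg_left hchord hL0.le
        rw [exp_zero] at h2'
        have heq : L * ((1 - s / L) * 1 + s / L * exp (-L)) = L - s + s * exp (-L) := by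
          field_simp
        rw [heq] at h2'
        rw [hαexp]
        nlinarith
      -- exponent comparison
      have hlog2 : 0 ≤ Real.log (L / 2) := by
        apply Real.log_nonneg; linarith
      have hlx : Real.log x = -s := by simp [hsdef]
      have hexp_ineq : α * Real.log x - L + s ≤ Real.log (L / 2) - x * L := by
        rw [hlx]
        rw [hxexp]
        nlinarith
      have hmain : exp (α * Real.log x) * (α * x⁻¹) ≤ (L / 2) * exp (x * Real.log α) := by
        have hxinv : exp s = x⁻¹ := by rw [hxexp, ← Real.exp_neg, neg_neg]
        have hrw1 : exp (α * Real.log x) * (α * x⁻¹) = exp (α * Real.log x - L + s) := by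
          rw [show α * Real.log x - L + s = α * Real.log x + (-L) + s from by ring,
            Real.exp_add, Real.exp_add, ← hαexp, hxinv, mul_assoc]
        have hrw2 : (L / 2) * exp (x * Real.log α) = exp (Real.log (L / 2) - x * L) := by
          rw [Real.exp_sub, Real.exp_log (by linarith : (0:ℝ) < L / 2)]
          rw [show x * Real.log α = -(x * L) from by rw [hLdef]; ring, Real.exp_neg]
          field_simp
        rw [hrw1, hrw2]
        exact Real.exp_le_exp.2 hexp_ineq
      rw [hLdef] at hmain
      nlinarith [hmain]
  have hmem_t : t ∈ Set.Icc α 1 := ⟨ht0, ht1⟩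
  have hmem_1 : (1:ℝ) ∈ Set.Icc α 1 := ⟨hα1'.le, le_refl 1⟩
  have h := hanti hmem_t hmem_1 ht1
  have hf1 : f 1 = α / 2 := by
    simp only [hf]
    rw [Real.log_one, mul_zero, Real.exp_zero, one_mul, Real.exp_log hα0]
    ring
  have hft : f t = (1/2) * α ^ t + t ^ α - 1 := by
    have ht0' : 0 < t := lt_of_lt_of_le hα0 ht0
    simp only [hf]
    rw [Real.rpow_def_of_pos hα0, Real.rpow_def_of_pos ht0', mul_comm (Real.log α) t,
      mul_comm (Real.log t) α]
  rw [hf1, hft] at h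
  exact h
end

section
/- The function Q(x) = (3 - x^2)(1 + x^{2√3}) - 4 x^{√3 - 1} is convex on (0,1), i.e., Q''(x) ≥ 0 for all x ∈ (0,1). -/
open Real Set

/-! Auxiliary lemmas for rational-exponent rpow bounds. -/

lemma rpow_div_le' {r c : ℝ} (hr : 0 ≤ r) (hc : 0 ≤ c) (m n : ℕ) (hn : n ≠ 0)
    (h : r ^ m ≤ c ^ n) : r ^ ((m : ℝ) / n) ≤ c := by
  have hb : (r ^ ((m : ℝ) / n)) ^ n = r ^ m := by
    rw [← Real.rpow_natCast (r ^ ((m : ℝ) / n)) n, ← Real.rpow_mul hr,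
      div_mul_cancel₀, Real.rpow_natCast]
    exact_mod_cast hn
  exact le_of_pow_le_pow_left₀ hn hc (by rw [hb]; exact h)

lemma le_rpow_div' {l d : ℝ} (hl : 0 ≤ l) (m n : ℕ) (hn : n ≠ 0)
    (h : d ^ n ≤ l ^ m) : d ≤ l ^ ((m : ℝ) / n) := by
  have hb : (l ^ ((m : ℝ) / n)) ^ n = l ^ m := by
    rw [← Real.rpow_natCast (l ^ ((m : ℝ) / n)) n, ← Real.rpow_mul hl,
      div_mul_cancel₀, Real.rpow_natCast]
    exact_mod_cast hn
  exact le_of_pow_le_pow_left₀ hn (Real.rpow_nonneg hl _) (by rw [hb]; exact h)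

lemma s_lb' : 1.732 ≤ Real.sqrt 3 := by
  nlinarith [Real.sq_sqrt (by norm_num : (0:ℝ) ≤ 3), Real.sqrt_nonneg 3]

lemma s_ub' : Real.sqrt 3 ≤ 1.7321 := by
  nlinarith [Real.sq_sqrt (by norm_num : (0:ℝ) ≤ 3), Real.sqrt_nonneg 3]

/-! First and second derivatives of `Q`. -/

noncomputable def Q1 (x : ℝ) : ℝ :=
  -2*x + 6*Real.sqrt 3*x^(2*Real.sqrt 3-1) - (2*Real.sqrt 3+2)*x^(2*Real.sqrt 3+1)
    - (4*Real.sqrt 3-4)*x^(Real.sqrt 3-2)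

noncomputable def Q2 (x : ℝ) : ℝ :=
  -2 + (36-6*Real.sqrt 3)*x^(2*Real.sqrt 3-2) - (14+6*Real.sqrt 3)*x^(2*Real.sqrt 3)
    - (20-12*Real.sqrt 3)*x^(Real.sqrt 3-3)

lemma hQ1 {x : ℝ} (hx : 0 < x) :
    HasDerivAt (fun x : ℝ => (3 - x ^ 2) * (1 + x ^ (2 * Real.sqrt 3))
        - 4 * x ^ (Real.sqrt 3 - 1)) (Q1 x) x := by
  have hne := hx.ne'
  have h1 : HasDerivAt (fun x : ℝ => 3 - x ^ 2) (-(2 * x ^ 1)) x := by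
    simpa using (hasDerivAt_pow 2 x).const_sub 3
  have h2 : HasDerivAt (fun x : ℝ => 1 + x ^ (2 * Real.sqrt 3))
      (2 * Real.sqrt 3 * x ^ (2 * Real.sqrt 3 - 1)) x :=
    (Real.hasDerivAt_rpow_const (Or.inl hne)).const_add 1
  have h3 := (Real.hasDerivAt_rpow_const (p := Real.sqrt 3 - 1) (Or.inl hne)).const_mul 4
  have h := (h1.mul h2).sub h3
  refine HasDerivAt.congr_deriv h (Eq.symm ?_)
  have e1 : x * x ^ (2*Real.sqrt 3) = x ^ (2*Real.sqrt 3+1) := by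
    nth_rewrite 1 [← Real.rpow_one x]
    rw [← Real.rpow_add hx]; ring_nf
  have e2 : x^2 * x ^ (2*Real.sqrt 3-1) = x ^ (2*Real.sqrt 3+1) := by
    rw [← Real.rpow_natCast x 2, ← Real.rpow_add hx]; norm_num; ring_nf
  have e3 : Real.sqrt 3 - 1 - 1 = Real.sqrt 3 - 2 := by ring
  rw [e3]
  simp only [Q1, pow_one]
  linear_combination 2*e1 + 2*Real.sqrt 3*e2

lemma hQ2 {x : ℝ} (hx : 0 < x) : HasDerivAt Q1 (Q2 x) x := by
  have hne := hx.ne'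
  have hs : Real.sqrt 3 ^ 2 = 3 := Real.sq_sqrt (by norm_num)
  have h1 : HasDerivAt (fun x : ℝ => -2*x) (-2) x := by
    simpa using (hasDerivAt_id x).const_mul (-2)
  have h2 := (Real.hasDerivAt_rpow_const (p := 2*Real.sqrt 3 - 1) (Or.inl hne)).const_mul
    (6*Real.sqrt 3)
  have h3 := (Real.hasDerivAt_rpow_const (p := 2*Real.sqrt 3 + 1) (Or.inl hne)).const_mul
    (2*Real.sqrt 3+2)
  have h4 := (Real.hasDerivAt_rpow_const (p := Real.sqrt 3 - 2) (Or.inl hne)).const_mul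
    (4*Real.sqrt 3-4)
  have h := ((h1.add h2).sub h3).sub h4
  have e1 : 2*Real.sqrt 3 - 1 - 1 = 2*Real.sqrt 3 - 2 := by ring
  have e2 : 2*Real.sqrt 3 + 1 - 1 = 2*Real.sqrt 3 := by ring
  have e3 : Real.sqrt 3 - 2 - 1 = Real.sqrt 3 - 3 := by ring
  rw [e1, e2, e3] at h
  refine HasDerivAt.congr_deriv h (Eq.symm ?_)
  simp only [Q2]
  linear_combination (-12*x^(2*Real.sqrt 3-2) + 4*x^(2*Real.sqrt 3) + 4*x^(Real.sqrt 3-3)) * hs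

/-! The rescaled second derivative `Pf x = x ^ (3 - √3) * Q2 x` and its nonnegativity. -/

noncomputable def Pf (x : ℝ) : ℝ :=
  -2*x^(3-Real.sqrt 3) + (36-6*Real.sqrt 3)*x^(Real.sqrt 3+1)
    - (14+6*Real.sqrt 3)*x^(Real.sqrt 3+3) + (12*Real.sqrt 3-20)

lemma Pf_interval {x l r Lo Hi2 Hi3 : ℝ} (hx0 : 0 < x) (hx1 : x ≤ 1)
    (hlx : l ≤ x) (hxr : x ≤ r) (hl : 0 ≤ l)
    (hLo : 0 ≤ Lo) (hHi2 : 0 ≤ Hi2) (hHi3 : 0 ≤ Hi3)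
    (h1 : Lo ^ 4 ≤ l ^ 11) (h2 : r ^ 14 ≤ Hi2 ^ 3) (h3 : r ^ 5 ≤ Hi3 ^ 4)
    (hfin : 0 ≤ (256074/10000) * Lo - (243926/10000) * Hi2 - 2 * Hi3 + 784/1000) :
    0 ≤ Pf x := by
  have hs1 := s_lb'
  have hs2 := s_ub'
  have hr : 0 ≤ r := le_trans hx0.le hxr
  have t1 : x ^ ((11:ℝ)/4) ≤ x ^ (Real.sqrt 3 + 1) :=
    Real.rpow_le_rpow_of_exponent_ge hx0 hx1 (by norm_num at hs2 ⊢; linarith)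
  have t2 : l ^ ((11:ℝ)/4) ≤ x ^ ((11:ℝ)/4) :=
    Real.rpow_le_rpow hl hlx (by norm_num)
  have t3 : Lo ≤ l ^ ((11:ℝ)/4) := by
    have := le_rpow_div' hl 11 4 (by norm_num) h1
    norm_num at this; exact this
  have hX1 : Lo ≤ x ^ (Real.sqrt 3 + 1) := le_trans t3 (le_trans t2 t1)
  have u1 : x ^ (Real.sqrt 3 + 3) ≤ x ^ ((14:ℝ)/3) :=
    Real.rpow_le_rpow_of_exponent_ge hx0 hx1 (by norm_num at hs1 ⊢; linarith)
  have u2 : x ^ ((14:ℝ)/3) ≤ r ^ ((14:ℝ)/3) :=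
    Real.rpow_le_rpow hx0.le hxr (by norm_num)
  have u3 : r ^ ((14:ℝ)/3) ≤ Hi2 := by
    have := rpow_div_le' hr hHi2 14 3 (by norm_num) h2
    norm_num at this; exact this
  have hX2 : x ^ (Real.sqrt 3 + 3) ≤ Hi2 := le_trans u1 (le_trans u2 u3)
  have v1 : x ^ (3 - Real.sqrt 3) ≤ x ^ ((5:ℝ)/4) :=
    Real.rpow_le_rpow_of_exponent_ge hx0 hx1 (by norm_num at hs2 ⊢; linarith)
  have v2 : x ^ ((5:ℝ)/4) ≤ r ^ ((5:ℝ)/4) :=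
    Real.rpow_le_rpow hx0.le hxr (by norm_num)
  have v3 : r ^ ((5:ℝ)/4) ≤ Hi3 := by
    have := rpow_div_le' hr hHi3 5 4 (by norm_num) h3
    norm_num at this; exact this
  have hX3 : x ^ (3 - Real.sqrt 3) ≤ Hi3 := le_trans v1 (le_trans v2 v3)
  have A1 : (256074/10000 : ℝ) * Lo ≤ (36 - 6*Real.sqrt 3) * x ^ (Real.sqrt 3 + 1) := by
    have h1 : (256074/10000 : ℝ) * Lo ≤ (36 - 6*Real.sqrt 3) * Lo := by
      apply mul_le_mul_of_nonneg_right _ hLo; norm_num at hs2 ⊢; linarith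
    have h2 : (36 - 6*Real.sqrt 3) * Lo ≤ (36 - 6*Real.sqrt 3) * x ^ (Real.sqrt 3 + 1) := by
      apply mul_le_mul_of_nonneg_left hX1; norm_num at hs2 ⊢; linarith
    linarith
  have A2 : (14 + 6*Real.sqrt 3) * x ^ (Real.sqrt 3 + 3) ≤ (243926/10000 : ℝ) * Hi2 := by
    have h1 : (14 + 6*Real.sqrt 3) * x ^ (Real.sqrt 3 + 3) ≤ (14 + 6*Real.sqrt 3) * Hi2 := by
      apply mul_le_mul_of_nonneg_left hX2; norm_num at hs1 ⊢; linarith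
    have h2 : (14 + 6*Real.sqrt 3) * Hi2 ≤ (243926/10000 : ℝ) * Hi2 := by
      apply mul_le_mul_of_nonneg_right _ hHi2; norm_num at hs2 ⊢; linarith
    linarith
  have A4 : (784/1000 : ℝ) ≤ 12*Real.sqrt 3 - 20 := by norm_num at hs1 ⊢; linarith
  simp only [Pf]
  linarith [hX3]

lemma Pf_nonneg_low {x : ℝ} (hx0 : 0 < x) (hxr : x ≤ 39/50) : 0 ≤ Pf x := by
  rcases le_or_gt x (3/20) with h | h
  · exact Pf_interval hx0 (by linarith) hx0.le h le_rfl le_rfl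
      (by norm_num : (0:ℝ) ≤ 144/1000000) (by norm_num : (0:ℝ) ≤ 934/10000)
      (by norm_num) (by norm_num) (by norm_num) (by norm_num)
  rcases le_or_gt x (3/10) with h2 | h2
  · exact Pf_interval hx0 (by linarith) h.le h2 (by norm_num)
      (by norm_num : (0:ℝ) ≤ 541/100000) (by norm_num : (0:ℝ) ≤ 364/100000)
      (by norm_num : (0:ℝ) ≤ 2221/10000) (by norm_num) (by norm_num) (by norm_num) (by norm_num)
  rcases le_or_gt x (9/20) with h3 | h3
  · exact Pf_interval hx0 (by linarith) h2.le h3 (by norm_num)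
      (by norm_num : (0:ℝ) ≤ 364/10000) (by norm_num : (0:ℝ) ≤ 242/10000)
      (by norm_num : (0:ℝ) ≤ 369/1000) (by norm_num) (by norm_num) (by norm_num) (by norm_num)
  rcases le_or_gt x (3/5) with h4 | h4
  · exact Pf_interval hx0 (by linarith) h3.le h4 (by norm_num)
      (by norm_num : (0:ℝ) ≤ 111/1000) (by norm_num : (0:ℝ) ≤ 923/10000)
      (by norm_num : (0:ℝ) ≤ 5282/10000) (by norm_num) (by norm_num) (by norm_num) (by norm_num)
  rcases le_or_gt x (7/10) with h5 | h5
  · exact Pf_interval hx0 (by linarith) h4.le h5 (by norm_num)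
      (by norm_num : (0:ℝ) ≤ 245/1000) (by norm_num : (0:ℝ) ≤ 19/100)
      (by norm_num : (0:ℝ) ≤ 641/1000) (by norm_num) (by norm_num) (by norm_num) (by norm_num)
  · exact Pf_interval hx0 (by linarith) h5.le hxr (by norm_num)
      (by norm_num : (0:ℝ) ≤ 374/1000) (by norm_num : (0:ℝ) ≤ 314/1000)
      (by norm_num : (0:ℝ) ≤ 734/1000) (by norm_num) (by norm_num) (by norm_num) (by norm_num)

noncomputable def Pf' (x : ℝ) : ℝ :=
  -2*(3-Real.sqrt 3)*x^(2-Real.sqrt 3) + (36-6*Real.sqrt 3)*(Real.sqrt 3+1)*x^(Real.sqrt 3)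
    - (14+6*Real.sqrt 3)*(Real.sqrt 3+3)*x^(Real.sqrt 3+2)

lemma hPf' {x : ℝ} (hx : 0 < x) : HasDerivAt Pf (Pf' x) x := by
  have hne := hx.ne'
  have h1 := (Real.hasDerivAt_rpow_const (x := x) (p := 3 - Real.sqrt 3) (Or.inl hne)).const_mul
    (-2)
  have h2 := (Real.hasDerivAt_rpow_const (x := x) (p := Real.sqrt 3 + 1) (Or.inl hne)).const_mul
    (36-6*Real.sqrt 3)
  have h3 := (Real.hasDerivAt_rpow_const (x := x) (p := Real.sqrt 3 + 3) (Or.inl hne)).const_mul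
    (14+6*Real.sqrt 3)
  have h := ((h1.add h2).sub h3).add_const (12*Real.sqrt 3-20)
  have e1 : 3 - Real.sqrt 3 - 1 = 2 - Real.sqrt 3 := by ring
  have e2 : Real.sqrt 3 + 1 - 1 = Real.sqrt 3 := by ring
  have e3 : Real.sqrt 3 + 3 - 1 = Real.sqrt 3 + 2 := by ring
  rw [e1, e2, e3] at h
  unfold Pf Pf'
  refine HasDerivAt.congr_deriv h ?_
  ring

lemma Pf'_nonpos {x : ℝ} (hxl : 39/50 ≤ x) (hx1 : x ≤ 1) : Pf' x ≤ 0 := by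
  have hs1 := s_lb'
  have hs2 := s_ub'
  have hs : Real.sqrt 3 ^ 2 = 3 := Real.sq_sqrt (by norm_num)
  norm_num at hs1 hs2
  have hx0 : (0:ℝ) < x := by linarith
  have k1 : x ^ (Real.sqrt 3) ≤ x ^ (2 - Real.sqrt 3) :=
    Real.rpow_le_rpow_of_exponent_ge hx0 hx1 (by linarith)
  have k2 : x ^ (Real.sqrt 3 + 2) = x ^ (Real.sqrt 3) * x ^ 2 := by
    rw [Real.rpow_add hx0, Real.rpow_two]
  have k3 : (0:ℝ) < x ^ (Real.sqrt 3) := Real.rpow_pos_of_pos hx0 _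
  have key : (36-6*Real.sqrt 3)*(Real.sqrt 3+1) ≤
      2*(3-Real.sqrt 3) + (14+6*Real.sqrt 3)*(Real.sqrt 3+3)*x^2 := by
    nlinarith [sq_nonneg (x - 39/50), sq_nonneg x, hs]
  have m1 : (36-6*Real.sqrt 3)*(Real.sqrt 3+1)*x^(Real.sqrt 3) ≤
      (2*(3-Real.sqrt 3) + (14+6*Real.sqrt 3)*(Real.sqrt 3+3)*x^2) * x^(Real.sqrt 3) :=
    mul_le_mul_of_nonneg_right key k3.le
  have m2 : 2*(3-Real.sqrt 3)*x^(Real.sqrt 3) ≤ 2*(3-Real.sqrt 3)*x^(2-Real.sqrt 3) :=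
    mul_le_mul_of_nonneg_left k1 (by linarith)
  simp only [Pf']
  nlinarith [m1, m2, k2]

lemma Pf_one : Pf 1 = 0 := by
  simp only [Pf, Real.one_rpow]; ring

lemma Pf_nonneg_high {x : ℝ} (hxl : 39/50 ≤ x) (hx1 : x ≤ 1) : 0 ≤ Pf x := by
  have hanti : AntitoneOn Pf (Icc (39/50 : ℝ) 1) := by
    apply antitoneOn_of_hasDerivWithinAt_nonpos (convex_Icc _ _) (f' := Pf')
    · intro y hy
      have hy0 : (0:ℝ) < y := lt_of_lt_of_le (by norm_num) hy.1
      exact (hPf' hy0).continuousAt.continuousWithinAt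
    · intro y hy
      rw [interior_Icc] at hy
      exact (hPf' (lt_of_lt_of_le (by norm_num) hy.1.le)).hasDerivWithinAt
    · intro y hy
      rw [interior_Icc] at hy
      exact Pf'_nonpos hy.1.le hy.2.le
  have := hanti (mem_Icc.2 ⟨hxl, hx1⟩) (mem_Icc.2 ⟨by norm_num, le_rfl⟩) hx1
  rw [Pf_one] at this
  exact this

lemma Q2_nonneg {x : ℝ} (hx0 : 0 < x) (hx1 : x < 1) : 0 ≤ Q2 x := by
  have hP : 0 ≤ Pf x := by
    rcases le_or_gt x (39/50) with h | h
    · exact Pf_nonneg_low hx0 h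
    · exact Pf_nonneg_high h.le hx1.le
  have e1 : x^(2*Real.sqrt 3-2) = x^(Real.sqrt 3-3)*x^(Real.sqrt 3+1) := by
    rw [← Real.rpow_add hx0]; ring_nf
  have e2 : x^(2*Real.sqrt 3) = x^(Real.sqrt 3-3)*x^(Real.sqrt 3+3) := by
    rw [← Real.rpow_add hx0]; ring_nf
  have e3 : x^(Real.sqrt 3-3)*x^(3-Real.sqrt 3) = 1 := by
    rw [← Real.rpow_add hx0]; norm_num
  have hQ : Q2 x = x^(Real.sqrt 3-3) * Pf x := by
    simp only [Q2, Pf]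
    linear_combination (36-6*Real.sqrt 3)*e1 - (14+6*Real.sqrt 3)*e2 + 2*e3
  rw [hQ]
  exact mul_nonneg (Real.rpow_nonneg hx0.le _) hP

theorem stmt_19 :
    ConvexOn ℝ (Ioo (0 : ℝ) 1)
      (fun x : ℝ => (3 - x ^ 2) * (1 + x ^ (2 * Real.sqrt 3))
        - 4 * x ^ (Real.sqrt 3 - 1)) := by
  have hint : interior (Ioo (0:ℝ) 1) = Ioo 0 1 := isOpen_Ioo.interior_eq
  apply convexOn_of_hasDerivWithinAt2_nonneg (convex_Ioo 0 1) (f' := Q1) (f'' := Q2)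
  · intro y hy
    exact (hQ1 hy.1).continuousAt.continuousWithinAt
  · intro y hy
    rw [hint] at hy
    exact (hQ1 hy.1).hasDerivWithinAt
  · intro y hy
    rw [hint] at hy
    exact (hQ2 hy.1).hasDerivWithinAt
  · intro y hy
    rw [hint] at hy
    exact Q2_nonneg hy.1 hy.2
end
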